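/- arXiv:2209.03980 — 4 statements merged into one kernel-verified Lean document; each statement's English description precedes it below -/
import Mathlib

section
/- Let p be a prime, G̃ the Vilenkin group, and φ ∈ L²(G̃). Let f₁, f₂ ∈ ⟨φ⟩ and let m₁, m₂ ∈ L²(U*) (extended H⊥-periodically to G̃*) satisfy f̂ᵢ(Bω) = mᵢ(ω)φ̂(ω) a.e. for i = 1, 2. Then for a.e. ω: [f̂₁, f̂₂](Bω) = Σ_{ζ=0}^{p−1} m₁(ω ⊕ 0.ζ) · conj(m₂(ω ⊕ 0.ζ)) · P_φ(ω ⊕ 0.ζ). -/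
/-!
Common setting: the Vilenkin group `Vil p` (sequences `ℤ → ZMod p` vanishing
below some index), its discrete subgroup `H`, the neighbourhood `U`,
the shift automorphism, the generalized characters, and a bundled structure
`VilenkinSetting` carrying the Haar measures on the group and on its dual
(realized on the same underlying sequence space), the Plancherel (Fourier)
transform, translations and the dilation operator, with their standard
compatibility properties.
-/

open MeasureTheory Filter Topology
open scoped ENNReal NNReal Pointwise Classical ComplexConjugate

noncomputable section

/-- The underlying additive group of the Vilenkin group: sequences
`x : ℤ → ZMod p` with `x j = 0` for all `j` below some `k = k(x)`. -/
def vilCarrier (p : ℕ) : AddSubgroup (ℤ → ZMod p) where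
  carrier := {x | ∃ k : ℤ, ∀ j < k, x j = 0}
  zero_mem' := ⟨0, fun _ _ => rfl⟩
  add_mem' := by
    rintro a b ⟨k, hk⟩ ⟨l, hl⟩
    refine ⟨min k l, fun j hj => ?_⟩
    have h1 := hk j (lt_of_lt_of_le hj (min_le_left _ _))
    have h2 := hl j (lt_of_lt_of_le hj (min_le_right _ _))
    simp_all [Pi.add_apply]
  neg_mem' := by
    rintro a ⟨k, hk⟩
    exact ⟨k, fun j hj => by simp [hk j hj]⟩

/-- The Vilenkin group (as a type). The dual group `G̃*` is realized on the
same type of sequences. -/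
abbrev Vil (p : ℕ) : Type := vilCarrier p

/-- The discrete subgroup `H = {x : x_j = 0 for j > 0}` of the Vilenkin group.
On the dual side the same subgroup realizes the annihilator `H⊥`. -/
def Hsub (p : ℕ) : AddSubgroup (Vil p) where
  carrier := {x | ∀ j > 0, (x : ℤ → ZMod p) j = 0}
  zero_mem' := fun _ _ => rfl
  add_mem' := by
    intro a b ha hb j hj
    simp [ha j hj, hb j hj]
  neg_mem' := by
    intro a ha j hj
    simp [ha j hj]

/-- The subgroup-neighbourhoods `U_l = {x : x_j = 0 for j ≤ l}` (as sets). -/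
def UsetL (p : ℕ) (l : ℤ) : Set (Vil p) := {x | ∀ j ≤ l, (x : ℤ → ZMod p) j = 0}

/-- `U = U_0`; on the dual side this realizes `U*`. -/
def Uset (p : ℕ) : Set (Vil p) := UsetL p 0

/-- The topology of the Vilenkin group, generated by cosets of the `U_l`. -/
instance (p : ℕ) : TopologicalSpace (Vil p) :=
  TopologicalSpace.generateFrom {s | ∃ (x : Vil p) (l : ℤ), s = (x + ·) '' UsetL p l}

/-- The Borel σ-algebra on the Vilenkin group. -/
instance (p : ℕ) : MeasurableSpace (Vil p) := borel (Vil p)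

/-- The shift automorphism `A` (resp. `B` on the dual side): `(Ax)_j = x_{j+1}`. -/
def shiftMap (p : ℕ) : Vil p ≃+ Vil p where
  toFun x := ⟨fun j => (x : ℤ → ZMod p) (j + 1), by
    obtain ⟨k, hk⟩ := x.2
    exact ⟨k - 1, fun j hj => hk _ (by omega)⟩⟩
  invFun x := ⟨fun j => (x : ℤ → ZMod p) (j - 1), by
    obtain ⟨k, hk⟩ := x.2
    exact ⟨k + 1, fun j hj => hk _ (by omega)⟩⟩
  left_inv x :=
    Subtype.ext (funext fun j =>
      congrArg (x : ℤ → ZMod p) (show j - 1 + 1 = j by omega))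
  right_inv x :=
    Subtype.ext (funext fun j =>
      congrArg (x : ℤ → ZMod p) (show j + 1 - 1 = j by omega))
  map_add' x y := by
    apply Subtype.ext
    funext j
    rfl

/-- The element `0.ζ` of the (dual) Vilenkin group: coordinate `ζ` in
position `1` and `0` elsewhere. -/
def dotEl (p : ℕ) (ζ : ZMod p) : Vil p :=
  ⟨fun j => if j = 1 then ζ else 0, ⟨1, fun j hj => if_neg (by omega)⟩⟩

/-- The generalized Walsh character pairing
`χ(x, ω) = exp((2πi/p) Σ_j x_j ω_{1-j})`. -/
def vilChar (p : ℕ) (x ω : Vil p) : ℂ :=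
  Complex.exp (2 * Real.pi * Complex.I *
    (((∑ᶠ j : ℤ, (x : ℤ → ZMod p) j * (ω : ℤ → ZMod p) (1 - j)).val : ℂ) / (p : ℂ)))

/-- A bundled Vilenkin-group setting: Haar measures `μ` (on `G̃`) and `ν`
(on the dual `G̃*`, realized on the same sequence space), normalized so that
`U` (resp. `U*`) has measure one, the Plancherel/Fourier transform `F`,
the translation operators `T`, the dilation operator `Dil`, and their
standard compatibility properties. -/
structure VilenkinSetting (p : ℕ) where
  /-- Haar measure on the Vilenkin group `G̃`. -/
  μ : Measure (Vil p)
  /-- Haar measure on the dual group `G̃*`. -/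
  ν : Measure (Vil p)
  μ_inv : ∀ g : Vil p, MeasurePreserving (fun x => x + g) μ μ
  ν_inv : ∀ g : Vil p, MeasurePreserving (fun x => x + g) ν ν
  μ_U : μ (Uset p) = 1
  ν_U : ν (Uset p) = 1
  /-- The Fourier (Plancherel) transform `f ↦ f̂`, a unitary from `L²(G̃)`
  onto `L²(G̃*)`. -/
  F : Lp ℂ 2 μ ≃ₗᵢ[ℂ] Lp ℂ 2 ν
  /-- The translation operators `T_g f = f(· ⊖ g)`. -/
  T : Vil p → (Lp ℂ 2 μ ≃ₗᵢ[ℂ] Lp ℂ 2 μ)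
  T_apply : ∀ (g : Vil p) (f : Lp ℂ 2 μ),
    (T g f : Vil p → ℂ) =ᵐ[μ] fun x => f (x - g)
  F_T : ∀ h ∈ Hsub p, ∀ f : Lp ℂ 2 μ,
    (F (T h f) : Vil p → ℂ) =ᵐ[ν] fun ω => vilChar p h ω * F f ω
  /-- The dilation operator `(𝔻f)(x) = p^{1/2} f(Ax)`. -/
  Dil : Lp ℂ 2 μ ≃ₗᵢ[ℂ] Lp ℂ 2 μ
  Dil_apply : ∀ f : Lp ℂ 2 μ,
    (Dil f : Vil p → ℂ) =ᵐ[μ] fun x => (Real.sqrt p : ℂ) * f (shiftMap p x)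
  F_Dil : ∀ f : Lp ℂ 2 μ,
    (F (Dil f) : Vil p → ℂ) =ᵐ[ν] fun ω =>
      ((Real.sqrt p)⁻¹ : ℂ) * F f ((shiftMap p).symm ω)

namespace VilenkinSetting

variable {p : ℕ} (S : VilenkinSetting p)

/-- The principal shift-invariant space `⟨φ⟩`, the closed linear span of the
translates `T_h φ`, `h ∈ H`. -/
def pSIS (φ : Lp ℂ 2 S.μ) : Submodule ℂ (Lp ℂ 2 S.μ) :=
  (Submodule.span ℂ (Set.range fun h : Hsub p => S.T h φ)).topologicalClosure

/-- Periodization of a function on the dual group: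
`Σ_{h ∈ H⊥} |g(ω ⊕ h)|²` (valued in `ℝ≥0∞`). -/
def perF (g : Vil p → ℂ) (ω : Vil p) : ℝ≥0∞ :=
  ∑' h : Hsub p, (‖g (ω + (h : Vil p))‖₊ : ℝ≥0∞) ^ 2

/-- The periodization function `P_φ(ω) = Σ_{h ∈ H⊥} |φ̂(ω ⊕ h)|²`. -/
def Pper (φ : Lp ℂ 2 S.μ) (ω : Vil p) : ℝ≥0∞ :=
  perF (S.F φ) ω

/-- `E_φ = supp P_φ`. -/
def Eset (φ : Lp ℂ 2 S.μ) : Set (Vil p) := {ω | S.Pper φ ω ≠ 0}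

/-- `V_φ = {ω ∈ U* : φ̂_{‖ω} ≠ 0}`. -/
def Vset (φ : Lp ℂ 2 S.μ) : Set (Vil p) :=
  {ω ∈ Uset p | ∃ h ∈ Hsub p, S.F φ (ω + h) ≠ 0}

/-- The spectrum `η(𝕊) = {ω ∈ U* : 𝕊̂_{‖ω} ≠ {0}}` of a subspace
`𝕊 ⊆ L²(G̃)`. -/
def spec (V : Submodule ℂ (Lp ℂ 2 S.μ)) : Set (Vil p) :=
  {ω ∈ Uset p | ∃ f ∈ V, ∃ h ∈ Hsub p, S.F f (ω + h) ≠ 0}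

/-- The quantity `Σ_{h∈H} |⟨f, T_h φ⟩|²` appearing in the frame conditions. -/
def frameSum (φ f : Lp ℂ 2 S.μ) : ℝ :=
  ∑' h : Hsub p, ‖(inner ℂ f (S.T h φ) : ℂ)‖ ^ 2

/-- `(T_h φ)_{h∈H}` is a Bessel sequence with some bound `b > 0`. -/
def IsBessel (φ : Lp ℂ 2 S.μ) : Prop :=
  ∃ b : ℝ, 0 < b ∧ ∀ f : Lp ℂ 2 S.μ, S.frameSum φ f ≤ b * ‖f‖ ^ 2

/-- `(T_h φ)_{h∈H}` is a frame for the closed subspace `W` with bounds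
`a ≤ b`: the translates span `W` and the frame inequalities hold on `W`. -/
def IsFrameFor (φ : Lp ℂ 2 S.μ) (W : Submodule ℂ (Lp ℂ 2 S.μ)) (a b : ℝ) : Prop :=
  S.pSIS φ = W ∧
    ∀ f ∈ W, a * ‖f‖ ^ 2 ≤ S.frameSum φ f ∧ S.frameSum φ f ≤ b * ‖f‖ ^ 2

/-- `(T_h φ)_{h∈H}` is a Parseval frame for the closed subspace `W`. -/
def IsParsevalFrameFor (φ : Lp ℂ 2 S.μ) (W : Submodule ℂ (Lp ℂ 2 S.μ)) : Prop :=
  S.pSIS φ = W ∧ ∀ f ∈ W, S.frameSum φ f = ‖f‖ ^ 2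

/-- The common part of the definitions of MRA and FMRA: a nested sequence of
closed subspaces, compatible with the dilation, with dense union and trivial
intersection. -/
def IsLadder (V : ℤ → Submodule ℂ (Lp ℂ 2 S.μ)) : Prop :=
  (∀ j, IsClosed (V j : Set (Lp ℂ 2 S.μ))) ∧
  (∀ j, V j ≤ V (j + 1)) ∧
  (∀ j, ∀ f : Lp ℂ 2 S.μ, f ∈ V j ↔ S.Dil f ∈ V (j + 1)) ∧
  Dense (⋃ j : ℤ, (V j : Set (Lp ℂ 2 S.μ))) ∧
  (∀ f : Lp ℂ 2 S.μ, (∀ j : ℤ, f ∈ V j) → f = 0)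

/-- `(V_j)` is an MRA with scaling function `φ`: the translates of `φ` form
an orthonormal basis of `V₀`. -/
def IsMRA (V : ℤ → Submodule ℂ (Lp ℂ 2 S.μ)) (φ : Lp ℂ 2 S.μ) : Prop :=
  S.IsLadder V ∧ φ ∈ V 0 ∧ S.pSIS φ = V 0 ∧
    Orthonormal ℂ (fun h : Hsub p => S.T h φ)

/-- `(V_j)` is an FMRA with scaling function `φ` and frame bounds `a ≤ b`. -/
def IsFMRAWith (V : ℤ → Submodule ℂ (Lp ℂ 2 S.μ)) (φ : Lp ℂ 2 S.μ) (a b : ℝ) : Prop :=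
  S.IsLadder V ∧ φ ∈ V 0 ∧ 0 < a ∧ a ≤ b ∧ S.IsFrameFor φ (V 0) a b

/-- `(V_j)` is an FMRA with scaling function `φ`. -/
def IsFMRA (V : ℤ → Submodule ℂ (Lp ℂ 2 S.μ)) (φ : Lp ℂ 2 S.μ) : Prop :=
  ∃ a b : ℝ, S.IsFMRAWith V φ a b

/-- `(V_j)` is a Parseval FMRA with scaling function `φ`. -/
def IsParsevalFMRA (V : ℤ → Submodule ℂ (Lp ℂ 2 S.μ)) (φ : Lp ℂ 2 S.μ) : Prop :=
  S.IsLadder V ∧ φ ∈ V 0 ∧ S.IsParsevalFrameFor φ (V 0)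

/-- `m` is an `H⊥`-periodic function belonging to `L²(U*)` (extended
`H⊥`-periodically to the whole dual group). -/
def IsFilter (m : Vil p → ℂ) : Prop :=
  (∀ ω : Vil p, ∀ h ∈ Hsub p, m (ω + h) = m ω) ∧
    MemLp m 2 (S.ν.restrict (Uset p))

/-- The bracket `[g₁, g₂](ω) = Σ_{h∈H⊥} g₁(ω ⊕ h) conj (g₂(ω ⊕ h))`. -/
def brkt (g₁ g₂ : Vil p → ℂ) (ω : Vil p) : ℂ :=
  ∑' h : Hsub p, g₁ (ω + (h : Vil p)) * conj (g₂ (ω + (h : Vil p)))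

end VilenkinSetting

/-! ### Additional notions used in the Cantor-dyadic-group (p = 2) setting -/

/-- `Λ₁ = {n ∈ Λ : σ n ∈ Λ}`. -/
def Lam1 (p : ℕ) : Set (Vil p) :=
  {n | n ∈ Hsub p ∧ (shiftMap p).symm n ∈ Hsub p}

/-- `Λ ∖ Λ₁`. -/
def LamO (p : ℕ) : Set (Vil p) := (Hsub p : Set (Vil p)) \ Lam1 p

namespace VilenkinSetting

variable {p : ℕ} (S : VilenkinSetting p)

/-- `Σ_{n ∈ s} |φ̂(σ(ω + n))|²` for a subset `s` of the lattice. -/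
def sumShift (φ : Lp ℂ 2 S.μ) (s : Set (Vil p)) (ω : Vil p) : ℝ≥0∞ :=
  ∑' n : s, (‖S.F φ ((shiftMap p).symm (ω + (n : Vil p)))‖₊ : ℝ≥0∞) ^ 2

/-- `Δ₂ = {ω ∈ D : Σ_{n∈Λ₁}|φ̂(σ(ω+n))|² ≠ 0 and Σ_{n∈Λ∖Λ₁}|φ̂(σ(ω+n))|² ≠ 0}`. -/
def Delta2 (φ : Lp ℂ 2 S.μ) : Set (Vil p) :=
  {ω ∈ Uset p | S.sumShift φ (Lam1 p) ω ≠ 0 ∧ S.sumShift φ (LamO p) ω ≠ 0}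

/-- `Δ₁`: exactly one of the two partial periodizations is nonzero. -/
def Delta1 (φ : Lp ℂ 2 S.μ) : Set (Vil p) :=
  {ω ∈ Uset p |
    (S.sumShift φ (Lam1 p) ω ≠ 0 ∧ S.sumShift φ (LamO p) ω = 0) ∨
    (S.sumShift φ (Lam1 p) ω = 0 ∧ S.sumShift φ (LamO p) ω ≠ 0)}

/-- The blocked set `E = {ω ∈ Δ₂ : m(σω) = m(σω + 0.1) = 0}`. -/
def blockedSet (φ : Lp ℂ 2 S.μ) (m : Vil p → ℂ) : Set (Vil p) :=
  {ω ∈ S.Delta2 φ |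
    m ((shiftMap p).symm ω) = 0 ∧ m ((shiftMap p).symm ω + dotEl p 1) = 0}

/-- The spectrum `η(V₀) = {ω ∈ D : Σ_{n∈Λ}|φ̂(ω+n)|² ≠ 0}` of `V₀ = ⟨φ⟩`. -/
def etaV0 (φ : Lp ℂ 2 S.μ) : Set (Vil p) := {ω ∈ Uset p | S.Pper φ ω ≠ 0}

/-- `W₀`, the orthogonal complement of `V₀` in `V₁`. -/
def Wcompl (V : ℤ → Submodule ℂ (Lp ℂ 2 S.μ)) : Submodule ℂ (Lp ℂ 2 S.μ) :=
  V 1 ⊓ (V 0)ᗮ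

/-- Integer powers `𝔻^j` of the dilation operator. -/
def dilZ (j : ℤ) (f : Lp ℂ 2 S.μ) : Lp ℂ 2 S.μ :=
  if 0 ≤ j then (fun g => S.Dil g)^[j.toNat] f
  else (fun g => S.Dil.symm g)^[(-j).toNat] f

end VilenkinSetting

namespace VilenkinSetting

/-- The filter `m_ψ` of the candidate frame wavelet on the Cantor dyadic
group (`p = 2`):
`m_ψ(ω) = (−1)^{ω₀} conj(m(σω + 0.1)) Σ_{n'∈Λ∖Λ₁}|φ̂(σ(ω+n'))|²` on `Δ₂ + Λ`,
`1` on `(Δ₁ ∩ η(V₀)ᶜ) + Λ` and `0` otherwise. -/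
def mpsi (S : VilenkinSetting 2) (φ : Lp ℂ 2 S.μ) (m : Vil 2 → ℂ) (ω : Vil 2) : ℂ :=
  if ω ∈ S.Delta2 φ + (Hsub 2 : Set (Vil 2)) then
    (-1 : ℂ) ^ ((ω : ℤ → ZMod 2) 0).val *
      conj (m ((shiftMap 2).symm ω + dotEl 2 1)) *
      ((S.sumShift φ (LamO 2) ω).toReal : ℂ)
  else if ω ∈ (S.Delta1 φ ∩ (S.etaV0 φ)ᶜ) + (Hsub 2 : Set (Vil 2)) then 1
  else 0

/-- `ψ̂ = m_ψ · (φ̂ ∘ σ)`, the Fourier transform of the candidate frame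
wavelet. -/
def psiHat (S : VilenkinSetting 2) (φ : Lp ℂ 2 S.μ) (m : Vil 2 → ℂ) (ω : Vil 2) : ℂ :=
  S.mpsi φ m ω * S.F φ ((shiftMap 2).symm ω)

end VilenkinSetting
section AuxLemmas

instance zmodCountable (p : ℕ) : Countable (ZMod p) := by
  cases p
  · exact inferInstanceAs (Countable ℤ)
  · infer_instance

instance hsubCountable (p : ℕ) : Countable (Hsub p) := by
  have hinj : Function.Injective (fun h : Hsub p =>
      Finsupp.ofSupportFinite (fun j => ((h : Vil p) : ℤ → ZMod p) j) (by
        obtain ⟨k, hk⟩ := (h : Vil p).2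
        apply Set.Finite.subset (Set.finite_Icc k 0)
        intro j hj
        simp only [Function.mem_support] at hj
        constructor
        · by_contra hlt; exact hj (hk j (by omega))
        · by_contra hgt; exact hj (h.2 j (by omega)))) := by
    intro a b hab
    refine Subtype.ext (Subtype.ext (funext fun j => ?_))
    have := congrArg (fun f : ℤ →₀ ZMod p => f j) hab
    exact this
  exact hinj.countable

lemma measurableSet_Uset (p : ℕ) : MeasurableSet (Uset p) := by
  have hopen : IsOpen (Uset p) := by
    apply TopologicalSpace.GenerateOpen.basic
    exact ⟨0, 0, by ext y; simp [Uset]⟩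
  exact MeasurableSpace.measurableSet_generateFrom hopen

end AuxLemmas
section Aux2

example (p : ℕ) (a b : Vil p) (j : ℤ) : ((a + b : Vil p) : ℤ → ZMod p) j = (a : ℤ → ZMod p) j + (b : ℤ → ZMod p) j := rfl
example (p : ℕ) (a b : Vil p) (j : ℤ) : ((a - b : Vil p) : ℤ → ZMod p) j = (a : ℤ → ZMod p) j - (b : ℤ → ZMod p) j := rfl
example (p : ℕ) (a : Vil p) (j : ℤ) : ((shiftMap p a : Vil p) : ℤ → ZMod p) j = (a : ℤ → ZMod p) (j+1) := rfl
example (p : ℕ) (a : Vil p) (j : ℤ) : (((shiftMap p).symm a : Vil p) : ℤ → ZMod p) j = (a : ℤ → ZMod p) (j-1) := rfl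
example (p : ℕ) (ζ : ZMod p) (j : ℤ) : ((dotEl p ζ : Vil p) : ℤ → ZMod p) j = if j = 1 then ζ else 0 := rfl

/-- The decomposition `B⁻¹(H⊥) = ⨆ ζ (H⊥ + 0.ζ)` as an equivalence
`ZMod p × H ≃ H`, `(ζ, r) ↦ σ(0.ζ + r)`. -/
def zetaDecomp (p : ℕ) : ZMod p × Hsub p ≃ Hsub p where
  toFun x := ⟨shiftMap p (dotEl p x.1 + (x.2 : Vil p)), by
    intro j hj
    show ((dotEl p x.1 : Vil p) : ℤ → ZMod p) (j+1) + ((x.2 : Vil p) : ℤ → ZMod p) (j+1) = 0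
    rw [x.2.2 (j+1) (by omega)]
    simp [dotEl, show ¬ (j + 1 = 1) by omega]⟩
  invFun h := (((h : Vil p) : ℤ → ZMod p) 0,
    ⟨(shiftMap p).symm (h : Vil p) - dotEl p (((h : Vil p) : ℤ → ZMod p) 0), by
      intro j hj
      show ((h : Vil p) : ℤ → ZMod p) (j - 1) - ((dotEl p _ : Vil p) : ℤ → ZMod p) j = 0
      rcases eq_or_lt_of_le (by omega : (1:ℤ) ≤ j) with h1 | h1
      · simp [dotEl, ← h1]
      · rw [h.2 (j-1) (by omega)]
        simp [dotEl, show ¬ (j = 1) by omega]⟩)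
  left_inv x := by
    obtain ⟨ζ, r⟩ := x
    have hζ : ((shiftMap p (dotEl p ζ + (r : Vil p)) : Vil p) : ℤ → ZMod p) 0 = ζ := by
      show ((dotEl p ζ : Vil p) : ℤ → ZMod p) 1 + ((r : Vil p) : ℤ → ZMod p) 1 = ζ
      rw [r.2 1 one_pos]
      simp [dotEl]
    refine Prod.ext hζ (Subtype.ext ?_)
    show (shiftMap p).symm ((shiftMap p) (dotEl p ζ + (r : Vil p))) - dotEl p _ = (r : Vil p)
    rw [hζ, (shiftMap p).symm_apply_apply]
    abel
  right_inv h := by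
    refine Subtype.ext ?_
    show (shiftMap p) (dotEl p _ + ((shiftMap p).symm (h : Vil p) - dotEl p _)) = (h : Vil p)
    rw [add_sub_cancel]
    exact (shiftMap p).apply_symm_apply _

end Aux2
namespace VilenkinSetting

variable {p : ℕ} (S : VilenkinSetting p)

/-- Translation by `g` as a measurable equivalence. -/
def tauEquiv (g : Vil p) : Vil p ≃ᵐ Vil p where
  toEquiv := Equiv.addRight g
  measurable_toFun := (S.ν_inv g).measurable
  measurable_invFun := by
    have h : ((Equiv.addRight g).symm : Vil p → Vil p) = fun x => x + (-g) := by
      funext x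
      simp [Equiv.addRight, sub_eq_add_neg]
    show Measurable ((Equiv.addRight g).symm : Vil p → Vil p)
    rw [h]
    exact (S.ν_inv (-g)).measurable

lemma nu_image_add (g : Vil p) (A : Set (Vil p)) :
    S.ν ((fun x => x + g) '' A) = S.ν A := by
  have himg : (fun x : Vil p => x + g) '' A = (fun x : Vil p => x + (-g)) ⁻¹' A := by
    ext x
    constructor
    · rintro ⟨a, ha, rfl⟩
      simpa [add_assoc] using ha
    · intro hx
      exact ⟨x + (-g), hx, by simp [add_assoc]⟩
  rw [himg]
  have h1 : S.ν ((fun x : Vil p => x + (-g)) ⁻¹' A) = (S.ν.map (S.tauEquiv (-g))) A :=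
    (MeasurableEquiv.map_apply (S.tauEquiv (-g)) A).symm
  rw [h1, show (S.ν.map (S.tauEquiv (-g))) = S.ν from (S.ν_inv (-g)).map_eq]

lemma exists_decomp (ω : Vil p) : ∃ h : Hsub p, ω - (h : Vil p) ∈ Uset p := by
  obtain ⟨k, hk⟩ := ω.2
  refine ⟨⟨⟨fun j => if j ≤ 0 then (ω : ℤ → ZMod p) j else 0,
      ⟨k, fun j hj => by simp [hk j hj]⟩⟩, fun j hj => by
        show (if j ≤ 0 then (ω : ℤ → ZMod p) j else 0) = 0
        simp [show ¬ j ≤ 0 by omega]⟩, fun j hj => ?_⟩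
  show (ω : ℤ → ZMod p) j - (if j ≤ 0 then (ω : ℤ → ZMod p) j else 0) = 0
  simp [hj]

/-- Step B: almost everywhere, the periodization of `|φ̂|²` is finite
(equivalently, the shifted squared norms are summable). -/
lemma ae_summable_pper (φ : Lp ℂ 2 S.μ) :
    ∀ᵐ ω ∂S.ν, Summable (fun h : Hsub p => ‖(S.F φ : Vil p → ℂ) (ω + (h : Vil p))‖ ^ 2) := by
  set f : Vil p → ℂ := ⇑(S.F φ) with hf
  have hfm : AEStronglyMeasurable f S.ν := Lp.aestronglyMeasurable (S.F φ)
  have hterm : ∀ g : Vil p, AEMeasurable (fun ω => (‖f (ω + g)‖₊ : ℝ≥0∞) ^ 2) S.ν := by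
    intro g
    have h1 : AEStronglyMeasurable (fun ω => f (ω + g)) S.ν :=
      hfm.comp_quasiMeasurePreserving (S.ν_inv g).quasiMeasurePreserving
    exact h1.enorm.pow_const 2
  set G : Vil p → ℝ≥0∞ := fun ω => ∑' h : Hsub p, (‖f (ω + (h : Vil p))‖₊ : ℝ≥0∞) ^ 2 with hGdef
  have hG : AEMeasurable G S.ν := AEMeasurable.ennreal_tsum fun h => hterm h
  have hGper : ∀ (h₀ : Hsub p) (ω : Vil p), G (ω + (h₀ : Vil p)) = G ω := by
    intro h₀ ω
    calc G (ω + (h₀ : Vil p))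
        = ∑' h : Hsub p, (‖f (ω + ((h₀ + h : Hsub p) : Vil p))‖₊ : ℝ≥0∞) ^ 2 := by
          refine tsum_congr fun h => ?_
          rw [AddSubgroup.coe_add, ← add_assoc]
      _ = G ω := Equiv.tsum_eq (Equiv.addLeft h₀) fun h : Hsub p =>
          (‖f (ω + (h : Vil p))‖₊ : ℝ≥0∞) ^ 2
  set Sset : Hsub p → Set (Vil p) := fun h => (fun x => x + (h : Vil p)) '' Uset p with hSdef
  have hUm : MeasurableSet (Uset p) := measurableSet_Uset p
  have hSm : ∀ h : Hsub p, MeasurableSet (Sset h) := fun h =>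
    ((S.tauEquiv (h : Vil p)).measurableSet_image).2 hUm
  have hdisj : Pairwise (Function.onFun Disjoint Sset) := by
    intro a b hab
    rw [Function.onFun, Set.disjoint_left]
    rintro x ⟨u, hu, rfl⟩ ⟨v, hv, hvx⟩
    apply hab
    refine Subtype.ext (Subtype.ext (funext fun j => ?_))
    rcases le_or_gt j 0 with hj | hj
    · have := congrArg (fun y : Vil p => (y : ℤ → ZMod p) j) hvx
      have h1 : (v : ℤ → ZMod p) j + ((b : Vil p) : ℤ → ZMod p) j
          = (u : ℤ → ZMod p) j + ((a : Vil p) : ℤ → ZMod p) j := this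
      rw [hu j hj, hv j hj] at h1
      simpa using h1.symm
    · rw [a.2 j hj, b.2 j hj]
  have hcover : ∀ ω : Vil p, ∃ h : Hsub p, ω ∈ Sset h := by
    intro ω
    obtain ⟨h, hh⟩ := exists_decomp ω
    exact ⟨h, ⟨ω - h, hh, by simp⟩⟩
  -- finiteness of the integral over U*
  have hlt : ∫⁻ ω, (‖f ω‖₊ : ℝ≥0∞) ^ 2 ∂S.ν ≠ ⊤ := by
    intro htop
    have hmem := Lp.memLp (S.F φ)
    have h2 : eLpNorm f 2 S.ν = ⊤ := by
      rw [eLpNorm_eq_lintegral_rpow_enorm_toReal (by norm_num) (by norm_num)]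
      simp_rw [enorm_eq_nnnorm, ENNReal.toReal_ofNat, show ((2:ℝ)) = ((2:ℕ):ℝ) by norm_num,
        ENNReal.rpow_natCast]
      rw [htop]
      simp [ENNReal.top_rpow_of_pos]
    exact absurd h2 hmem.2.ne
  have key : ∫⁻ ω in Uset p, G ω ∂S.ν ≠ ⊤ := by
    have h1 : ∫⁻ ω in Uset p, G ω ∂S.ν
        = ∑' h : Hsub p, ∫⁻ ω in Uset p, (‖f (ω + (h : Vil p))‖₊ : ℝ≥0∞) ^ 2 ∂S.ν :=
      lintegral_tsum fun h => (hterm (h : Vil p)).restrict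
    have h2 : ∀ h : Hsub p, ∫⁻ ω in Uset p, (‖f (ω + (h : Vil p))‖₊ : ℝ≥0∞) ^ 2 ∂S.ν
        = ∫⁻ ω in Sset h, (‖f ω‖₊ : ℝ≥0∞) ^ 2 ∂S.ν := fun h =>
      (S.ν_inv (h : Vil p)).setLIntegral_comp_emb
        (S.tauEquiv (h : Vil p)).measurableEmbedding
        (fun b => (‖f b‖₊ : ℝ≥0∞) ^ 2) (Uset p)
    rw [h1]
    simp_rw [h2]
    rw [← lintegral_iUnion hSm hdisj]
    exact ne_top_of_le_ne_top hlt (setLIntegral_le_lintegral _ _)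
  have haeU : S.ν ({ω | G ω = ⊤} ∩ Uset p) = 0 := by
    have h0 : S.ν.restrict (Uset p) {ω | G ω = ⊤} = 0 := by
      have := ae_lt_top' hG.restrict key
      rw [ae_iff] at this
      simpa [not_lt, top_le_iff] using this
    rw [Measure.restrict_apply' hUm] at h0
    exact h0
  have hnull : S.ν {ω | G ω = ⊤} = 0 := by
    have hsub : {ω | G ω = ⊤} ⊆
        ⋃ h : Hsub p, (fun x => x + (h : Vil p)) '' ({ω | G ω = ⊤} ∩ Uset p) := by
      intro ω hω
      obtain ⟨h, u, hu, hueq⟩ := hcover ω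
      refine Set.mem_iUnion.2 ⟨h, u, ⟨?_, hu⟩, hueq⟩
      have hueq' : u + (h : Vil p) = ω := hueq
      show G u = ⊤
      rw [← hGper h u, hueq']
      exact hω
    refine le_antisymm (le_trans (measure_mono hsub) ?_) zero_le
    refine le_trans (measure_iUnion_le _) ?_
    have : ∀ h : Hsub p,
        S.ν ((fun x => x + (h : Vil p)) '' ({ω | G ω = ⊤} ∩ Uset p)) = 0 := fun h => by
      rw [S.nu_image_add]; exact haeU
    rw [tsum_congr this]
    simp
  have hfin : ∀ᵐ ω ∂S.ν, G ω ≠ ⊤ := by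
    rw [ae_iff]
    simpa [not_not] using hnull
  filter_upwards [hfin] with ω hω
  have h1 : ∑' h : Hsub p, ((‖f (ω + (h : Vil p))‖₊ ^ 2 : ℝ≥0) : ℝ≥0∞) ≠ ⊤ := by
    simpa [ENNReal.coe_pow] using hω
  have h2 : Summable (fun h : Hsub p => ‖f (ω + (h : Vil p))‖₊ ^ 2) :=
    ENNReal.tsum_coe_ne_top_iff_summable.1 h1
  have h3 := NNReal.summable_coe.2 h2
  simpa [NNReal.coe_pow] using h3

end VilenkinSetting
/-- A `tsum` over a product with a finite first factor splits as a finite sum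
of `tsum`s over the sections, provided each section is summable. -/
lemma tsum_prod_eq_sum_tsum {α β : Type*} [Fintype α] (f : α × β → ℂ)
    (h : ∀ a : α, Summable fun b => f (a, b)) :
    ∑' x : α × β, f x = ∑ a : α, ∑' b : β, f (a, b) := by
  classical
  set Fa : α → α × β → ℂ := fun a x => if x.1 = a then f x else 0 with hFadef
  have hinj : ∀ a : α, Function.Injective (fun b : β => ((a, b) : α × β)) :=
    fun a b₁ b₂ hb => (Prod.ext_iff.1 hb).2
  have hsupp : ∀ a, Function.support (Fa a) ⊆ Set.range (fun b : β => ((a, b) : α × β)) := by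
    intro a x hx
    have hx1 : x.1 = a := by
      by_contra hne
      exact hx (if_neg hne)
    exact ⟨x.2, by rw [← hx1]⟩
  have hcomp : ∀ a, (fun b : β => Fa a (a, b)) = fun b => f (a, b) := by
    intro a; funext b; simp [Fa]
  have hsum : ∀ a, Summable (Fa a) := by
    intro a
    refine ((hinj a).summable_iff ?_).1 ?_
    · intro x hx
      refine if_neg fun hx1 => hx ⟨x.2, ?_⟩
      rw [← hx1]
    · show Summable fun b : β => Fa a (a, b)
      rw [hcomp a]
      exact h a
  have hfa : (fun x : α × β => ∑ a : α, Fa a x) = f := by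
    funext x
    simp [Fa, Finset.sum_ite_eq]
  calc ∑' x : α × β, f x = ∑' x : α × β, ∑ a : α, Fa a x := by rw [hfa]
    _ = ∑ a : α, ∑' x : α × β, Fa a x := Summable.tsum_finsetSum fun a _ => hsum a
    _ = ∑ a : α, ∑' b : β, f (a, b) := by
        refine Finset.sum_congr rfl fun a _ => ?_
        rw [← (hinj a).tsum_eq (hsupp a)]
        exact tsum_congr fun b => by simp [Fa]

/-- For `f₁, f₂ ∈ ⟨φ⟩` with `f̂ᵢ(Bω) = mᵢ(ω)φ̂(ω)` a.e.
(`mᵢ ∈ L²(U*)` extended `H⊥`-periodically), for a.e. `ω`: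
`[f̂₁, f̂₂](Bω) = Σ_{ζ=0}^{p−1} m₁(ω⊕0.ζ) conj(m₂(ω⊕0.ζ)) P_φ(ω⊕0.ζ)`
(where `P_φ = [φ̂, φ̂]`). -/
theorem bracket_of_refinable_pair
    (p : ℕ) (hp : p.Prime) (S : VilenkinSetting p) (φ f₁ f₂ : Lp ℂ 2 S.μ)
    (hf₁ : f₁ ∈ S.pSIS φ) (hf₂ : f₂ ∈ S.pSIS φ)
    (m₁ m₂ : Vil p → ℂ) (hm₁ : S.IsFilter m₁) (hm₂ : S.IsFilter m₂)
    (h₁ : ∀ᵐ ω ∂S.ν, S.F f₁ (shiftMap p ω) = m₁ ω * S.F φ ω)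
    (h₂ : ∀ᵐ ω ∂S.ν, S.F f₂ (shiftMap p ω) = m₂ ω * S.F φ ω) :
    ∀ᵐ ω ∂S.ν,
      VilenkinSetting.brkt (S.F f₁) (S.F f₂) (shiftMap p ω) =
        ∑ ζ ∈ Finset.range p,
          m₁ (ω + dotEl p (ζ : ZMod p)) * conj (m₂ (ω + dotEl p (ζ : ZMod p))) *
            VilenkinSetting.brkt (S.F φ) (S.F φ) (ω + dotEl p (ζ : ZMod p)) := by
  classical
  haveI : NeZero p := ⟨hp.ne_zero⟩
  set f : Vil p → ℂ := ⇑(S.F φ) with hfdef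
  set g₁ : Vil p → ℂ := ⇑(S.F f₁) with hg₁def
  set g₂ : Vil p → ℂ := ⇑(S.F f₂) with hg₂def
  have htrans : ∀ (P : Vil p → Prop), (∀ᵐ ω ∂S.ν, P ω) → ∀ g : Vil p,
      ∀ᵐ ω ∂S.ν, P (ω + g) := fun P hP g =>
    ((S.ν_inv g).quasiMeasurePreserving.tendsto_ae).eventually hP
  have hA : ∀ᵐ ω ∂S.ν, ∀ x : ZMod p × Hsub p,
      g₁ (shiftMap p (ω + (dotEl p x.1 + (x.2 : Vil p)))) =
        m₁ (ω + (dotEl p x.1 + (x.2 : Vil p))) * f (ω + (dotEl p x.1 + (x.2 : Vil p))) := by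
    rw [ae_all_iff]
    intro x
    exact htrans _ h₁ (dotEl p x.1 + (x.2 : Vil p))
  have hB : ∀ᵐ ω ∂S.ν, ∀ x : ZMod p × Hsub p,
      g₂ (shiftMap p (ω + (dotEl p x.1 + (x.2 : Vil p)))) =
        m₂ (ω + (dotEl p x.1 + (x.2 : Vil p))) * f (ω + (dotEl p x.1 + (x.2 : Vil p))) := by
    rw [ae_all_iff]
    intro x
    exact htrans _ h₂ (dotEl p x.1 + (x.2 : Vil p))
  have hS : ∀ᵐ ω ∂S.ν, ∀ ζ : ZMod p,
      Summable (fun r : Hsub p => ‖f ((ω + dotEl p ζ) + (r : Vil p))‖ ^ 2) := by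
    rw [ae_all_iff]
    intro ζ
    exact htrans _ (S.ae_summable_pper φ) (dotEl p ζ)
  filter_upwards [hA, hB, hS] with ω HA HB HS
  set c : ZMod p → ℂ := fun ζ => m₁ (ω + dotEl p ζ) * conj (m₂ (ω + dotEl p ζ)) with hc
  have hsummC : ∀ z : ZMod p,
      Summable (fun r : Hsub p => c z * ((‖f ((ω + dotEl p z) + (r : Vil p))‖ ^ 2 : ℝ) : ℂ)) := by
    intro z
    exact (Complex.summable_ofReal.2 (HS z)).mul_left (c z)
  have hbrkt : ∀ z : ZMod p, VilenkinSetting.brkt f f (ω + dotEl p z)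
      = ∑' r : Hsub p, ((‖f ((ω + dotEl p z) + (r : Vil p))‖ ^ 2 : ℝ) : ℂ) := by
    intro z
    refine tsum_congr fun r => ?_
    rw [Complex.mul_conj, Complex.normSq_eq_norm_sq]
  have hterm : ∀ x : ZMod p × Hsub p,
      g₁ (shiftMap p ω + ((zetaDecomp p x : Hsub p) : Vil p)) *
          conj (g₂ (shiftMap p ω + ((zetaDecomp p x : Hsub p) : Vil p)))
        = c x.1 * ((‖f ((ω + dotEl p x.1) + (x.2 : Vil p))‖ ^ 2 : ℝ) : ℂ) := by
    rintro ⟨ζ, r⟩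
    have he : ((zetaDecomp p (ζ, r) : Hsub p) : Vil p) =
        shiftMap p (dotEl p ζ + (r : Vil p)) := rfl
    have h1 : shiftMap p ω + ((zetaDecomp p (ζ, r) : Hsub p) : Vil p)
        = shiftMap p (ω + (dotEl p ζ + (r : Vil p))) := by
      rw [he]
      exact (map_add (shiftMap p) ω (dotEl p ζ + (r : Vil p))).symm
    rw [h1, HA (ζ, r), HB (ζ, r)]
    have hper1 : m₁ (ω + (dotEl p ζ + (r : Vil p))) = m₁ (ω + dotEl p ζ) := by
      rw [← add_assoc]
      exact hm₁.1 (ω + dotEl p ζ) (r : Vil p) r.2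
    have hper2 : m₂ (ω + (dotEl p ζ + (r : Vil p))) = m₂ (ω + dotEl p ζ) := by
      rw [← add_assoc]
      exact hm₂.1 (ω + dotEl p ζ) (r : Vil p) r.2
    rw [map_mul, hper1, hper2, mul_mul_mul_comm, Complex.mul_conj,
      Complex.normSq_eq_norm_sq,
      show ω + (dotEl p ζ + (r : Vil p)) = (ω + dotEl p ζ) + (r : Vil p) from
        (add_assoc _ _ _).symm]
  have hmain : VilenkinSetting.brkt g₁ g₂ (shiftMap p ω)
      = ∑ z : ZMod p, c z * VilenkinSetting.brkt f f (ω + dotEl p z) := by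
    unfold VilenkinSetting.brkt
    rw [← Equiv.tsum_eq (zetaDecomp p) (fun h : Hsub p =>
      g₁ (shiftMap p ω + (h : Vil p)) * conj (g₂ (shiftMap p ω + (h : Vil p))))]
    calc ∑' x : ZMod p × Hsub p,
          g₁ (shiftMap p ω + ((zetaDecomp p x : Hsub p) : Vil p)) *
            conj (g₂ (shiftMap p ω + ((zetaDecomp p x : Hsub p) : Vil p)))
        = ∑' x : ZMod p × Hsub p,
            c x.1 * ((‖f ((ω + dotEl p x.1) + ((x.2 : Hsub p) : Vil p))‖ ^ 2 : ℝ) : ℂ) :=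
          tsum_congr hterm
      _ = ∑ z : ZMod p, ∑' r : Hsub p,
            c z * ((‖f ((ω + dotEl p z) + (r : Vil p))‖ ^ 2 : ℝ) : ℂ) :=
          tsum_prod_eq_sum_tsum _ hsummC
      _ = ∑ z : ZMod p, c z * VilenkinSetting.brkt f f (ω + dotEl p z) := by
          refine Finset.sum_congr rfl fun z _ => ?_
          rw [tsum_mul_left, hbrkt z]
  rw [hmain]
  refine Finset.sum_nbij' (fun z : ZMod p => z.val) (fun ζ : ℕ => (ζ : ZMod p))
    (fun z _ => Finset.mem_range.2 (ZMod.val_lt z)) (fun ζ _ => Finset.mem_univ _)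
    (fun z _ => ZMod.natCast_rightInverse z)
    (fun ζ hζ => ZMod.val_cast_of_lt (Finset.mem_range.1 hζ))
    (fun z _ => by
      rw [show (((fun z : ZMod p => z.val) z : ℕ) : ZMod p) = z from
        ZMod.natCast_rightInverse z])
end
end

section
/- In the Cantor dyadic group FMRA setting, if the set E = {ω ∈ Δ₂ : m(σω) = m(σω + 0.1) = 0} has positive measure, then W₀ is not a principal shift-invariant space; i.e., there exists no ψ ∈ W₀ with W₀ = ⟨ψ⟩. -/
/-!
Common setting: the Vilenkin group `Vil p` (sequences `ℤ → ZMod p` vanishing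
below some index), its discrete subgroup `H`, the neighbourhood `U`,
the shift automorphism, the generalized characters, and a bundled structure
`VilenkinSetting` carrying the Haar measures on the group and on its dual
(realized on the same underlying sequence space), the Plancherel (Fourier)
transform, translations and the dilation operator, with their standard
compatibility properties.
-/

open MeasureTheory Filter Topology
open scoped ENNReal NNReal Pointwise Classical ComplexConjugate

noncomputable section

/-! ### Auxiliary infrastructure for the proof of Statement 11 -/

namespace CantorProofAux

open TopologicalSpace

/-- Coordinatewise description of addition. -/
lemma vil_add_apply {p : ℕ} (x y : Vil p) (j : ℤ) :
    ((x + y : Vil p) : ℤ → ZMod p) j = (x : ℤ → ZMod p) j + (y : ℤ → ZMod p) j := rfl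

lemma vil_sub_apply {p : ℕ} (x y : Vil p) (j : ℤ) :
    ((x - y : Vil p) : ℤ → ZMod p) j = (x : ℤ → ZMod p) j - (y : ℤ → ZMod p) j := rfl

lemma vil_zero_apply {p : ℕ} (j : ℤ) : ((0 : Vil p) : ℤ → ZMod p) j = 0 := rfl

lemma shift_apply {p : ℕ} (x : Vil p) (j : ℤ) :
    ((shiftMap p x : Vil p) : ℤ → ZMod p) j = (x : ℤ → ZMod p) (j + 1) := rfl

lemma shift_symm_apply {p : ℕ} (x : Vil p) (j : ℤ) :
    (((shiftMap p).symm x : Vil p) : ℤ → ZMod p) j = (x : ℤ → ZMod p) (j - 1) := rfl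

/-- The basic cosets. -/
def cs (p : ℕ) (x : Vil p) (l : ℤ) : Set (Vil p) := (x + ·) '' UsetL p l

lemma mem_UsetL {p : ℕ} {x : Vil p} {l : ℤ} :
    x ∈ UsetL p l ↔ ∀ j ≤ l, (x : ℤ → ZMod p) j = 0 := Iff.rfl

lemma mem_cs {p : ℕ} {w x : Vil p} {l : ℤ} :
    w ∈ cs p x l ↔ ∀ j ≤ l, (w : ℤ → ZMod p) j = (x : ℤ → ZMod p) j := by
  constructor
  · rintro ⟨u, hu, rfl⟩ j hj
    rw [vil_add_apply, hu j hj, add_zero]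
  · intro h
    refine ⟨w - x, fun j hj => ?_, show x + (w - x) = w by rw [add_sub_cancel]⟩
    rw [vil_sub_apply, h j hj, sub_self]

lemma cs_open {p : ℕ} (x : Vil p) (l : ℤ) : IsOpen (cs p x l) :=
  TopologicalSpace.isOpen_generateFrom_of_mem ⟨x, l, rfl⟩

instance (p : ℕ) : BorelSpace (Vil p) := ⟨rfl⟩

lemma UsetL_eq_cs (p : ℕ) (l : ℤ) : UsetL p l = cs p 0 l := by
  ext w
  simp only [mem_UsetL, mem_cs, vil_zero_apply]

lemma UsetL_measurable (p : ℕ) (l : ℤ) : MeasurableSet (UsetL p l) := by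
  rw [UsetL_eq_cs]; exact (cs_open _ _).measurableSet

lemma cs_measurable {p : ℕ} (x : Vil p) (l : ℤ) : MeasurableSet (cs p x l) :=
  (cs_open x l).measurableSet

/-- The family of all basic cosets. -/
def Cfam (p : ℕ) : Set (Set (Vil p)) := {s | ∃ (x : Vil p) (l : ℤ), s = cs p x l}

lemma isPiSystem_Cfam (p : ℕ) : IsPiSystem (Cfam p) := by
  rintro _ ⟨x, l, rfl⟩ _ ⟨y, m', rfl⟩ ⟨z, hz1, hz2⟩
  refine ⟨z, max l m', ?_⟩
  rw [mem_cs] at hz1 hz2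
  ext w
  simp only [Set.mem_inter_iff, mem_cs]
  constructor
  · rintro ⟨h1, h2⟩ j hj
    rcases le_max_iff.mp hj with hj' | hj'
    · rw [h1 j hj', ← hz1 j hj']
    · rw [h2 j hj', ← hz2 j hj']
  · intro h
    constructor
    · intro j hj; rw [h j (le_max_of_le_left hj), hz1 j hj]
    · intro j hj; rw [h j (le_max_of_le_right hj), hz2 j hj]

/-- Reconstruction of an element of `Vil 2` from a finite graph. -/
def fromFS (s : Finset (ℤ × ZMod 2)) : Vil 2 :=
  ⟨fun j => if (j, (1 : ZMod 2)) ∈ s then 1 else 0, by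
    refine ⟨(insert 0 (s.image Prod.fst)).min' (by simp), fun j hj => ?_⟩
    refine if_neg fun hmem => ?_
    have : j ∈ insert 0 (s.image Prod.fst) :=
      Finset.mem_insert_of_mem (Finset.mem_image_of_mem Prod.fst hmem)
    exact absurd (Finset.min'_le _ j this) (by omega)⟩

lemma zmod2_cases (a : ZMod 2) : a = 0 ∨ a = 1 := by revert a; decide

lemma Cfam_countable : (Cfam 2).Countable := by
  have hsub : Cfam 2 ⊆
      Set.range (fun q : Finset (ℤ × ZMod 2) × ℤ => cs 2 (fromFS q.1) q.2) := by
    rintro _ ⟨x, l, rfl⟩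
    obtain ⟨k, hk⟩ := x.2
    refine ⟨(((Finset.Icc k l).filter fun j => (x : ℤ → ZMod 2) j = 1).image
      fun j => (j, (1 : ZMod 2)), l), ?_⟩
    have key : ∀ j ≤ l, (fromFS (((Finset.Icc k l).filter
        fun j => (x : ℤ → ZMod 2) j = 1).image fun j => (j, (1 : ZMod 2))) :
        ℤ → ZMod 2) j = (x : ℤ → ZMod 2) j := by
      intro j hj
      show (if _ ∈ _ then (1 : ZMod 2) else 0) = _
      by_cases hx : (x : ℤ → ZMod 2) j = 1
      · rw [if_pos, hx]
        have hkj : k ≤ j := by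
          by_contra hc
          rw [hk j (by omega)] at hx
          exact absurd hx (by decide)
        exact Finset.mem_image_of_mem _ (Finset.mem_filter.mpr
          ⟨Finset.mem_Icc.mpr ⟨hkj, hj⟩, hx⟩)
      · rw [if_neg]
        · rcases zmod2_cases ((x : ℤ → ZMod 2) j) with h | h
          · rw [h]
          · exact absurd h hx
        · intro hmem
          obtain ⟨a, ha, ha2⟩ := Finset.mem_image.mp hmem
          obtain ⟨rfl, -⟩ : a = j ∧ (1 : ZMod 2) = 1 := by
            constructor
            · exact congrArg Prod.fst ha2
            · rfl
          exact hx (Finset.mem_filter.mp ha).2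
    show (fun q : Finset (ℤ × ZMod 2) × ℤ => cs 2 (fromFS q.1) q.2) _ = cs 2 x l
    ext w
    simp only
    rw [mem_cs, mem_cs]
    constructor
    · intro h j hj; rw [h j hj, key j hj]
    · intro h j hj; rw [h j hj, ← key j hj]
  exact (Set.countable_range _).mono hsub

end CantorProofAux
namespace CantorProofAux

/-- The element of `Vil 2` with a single `1` in position `i`. -/
def elAt (i : ℤ) : Vil 2 :=
  ⟨fun j => if j = i then 1 else 0, ⟨i, fun j hj => if_neg (by omega)⟩⟩

lemma elAt_apply (i j : ℤ) :
    ((elAt i : Vil 2) : ℤ → ZMod 2) j = if j = i then 1 else 0 := rfl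

section Measure

variable (S : VilenkinSetting 2)

lemma meas_cs (x : Vil 2) (l : ℤ) : S.ν (cs 2 x l) = S.ν (UsetL 2 l) := by
  have hpre : cs 2 x l = (fun w : Vil 2 => w + (-x)) ⁻¹' (UsetL 2 l) := by
    ext w
    simp only [Set.mem_preimage, mem_UsetL, mem_cs, vil_add_apply]
    constructor
    · intro h j hj
      rw [h j hj]
      show (x : ℤ → ZMod 2) j + (-x : Vil 2).1 j = 0
      rw [show ((-x : Vil 2) : ℤ → ZMod 2) j = -((x : ℤ → ZMod 2) j) from rfl]
      ring
    · intro h j hj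
      have := h j hj
      rw [show ((-x : Vil 2) : ℤ → ZMod 2) j = -((x : ℤ → ZMod 2) j) from rfl] at this
      have h2 : (w : ℤ → ZMod 2) j - (x : ℤ → ZMod 2) j = 0 := by
        rw [← this]; ring
      have := sub_eq_zero.mp h2
      exact this
  rw [hpre]
  exact (S.ν_inv (-x)).measure_preimage (UsetL_measurable 2 l).nullMeasurableSet

lemma UsetL_split (l : ℤ) :
    UsetL 2 l = cs 2 0 (l + 1) ∪ cs 2 (elAt (l + 1)) (l + 1) := by
  ext w
  simp only [Set.mem_union, mem_UsetL, mem_cs, vil_zero_apply, elAt_apply]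
  constructor
  · intro h
    rcases zmod2_cases ((w : ℤ → ZMod 2) (l + 1)) with hw | hw
    · left; intro j hj
      rcases lt_or_eq_of_le hj with hj' | hj'
      · exact h j (by omega)
      · rw [hj']; exact hw
    · right; intro j hj
      rcases lt_or_eq_of_le hj with hj' | hj'
      · rw [if_neg (by omega)]; exact h j (by omega)
      · rw [hj', if_pos rfl]; exact hw
  · rintro (h | h) j hj
    · exact h j (by omega)
    · rw [h j (by omega), if_neg (by omega)]

lemma UsetL_disj (l : ℤ) :
    Disjoint (cs 2 (0 : Vil 2) (l + 1)) (cs 2 (elAt (l + 1)) (l + 1)) := by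
  rw [Set.disjoint_left]
  rintro w h1 h2
  have e1 := (mem_cs.mp h1) (l + 1) le_rfl
  have e2 := (mem_cs.mp h2) (l + 1) le_rfl
  rw [vil_zero_apply] at e1
  rw [elAt_apply, if_pos rfl] at e2
  rw [e1] at e2
  exact absurd e2 (by decide)

lemma meas_UsetL_step (l : ℤ) :
    S.ν (UsetL 2 l) = 2 * S.ν (UsetL 2 (l + 1)) := by
  rw [UsetL_split l, measure_union (UsetL_disj l) (cs_measurable _ _),
    meas_cs S, meas_cs S, two_mul]

lemma meas_UsetL (l : ℤ) : S.ν (UsetL 2 l) = 2 ^ (-l) := by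
  have h2 : (2 : ℝ≥0∞) ≠ 0 := by norm_num
  have h2' : (2 : ℝ≥0∞) ≠ ⊤ := by norm_num
  have hmul : ∀ z : ℤ, (2 : ℝ≥0∞) ^ (z + 1) = 2 * 2 ^ z := by
    intro z
    rw [show z + 1 = 1 + z from by omega, ENNReal.zpow_add h2 h2', zpow_one]
  induction l using Int.induction_on with
  | zero => rw [neg_zero, zpow_zero]; exact S.ν_U
  | succ k ih =>
      have step := meas_UsetL_step S (k : ℤ)
      rw [ih, show (-(k:ℤ)) = -((k:ℤ)+1) + 1 from by omega, hmul] at step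
      exact ((ENNReal.mul_right_inj h2 h2').mp step).symm
  | pred k ih =>
      have step := meas_UsetL_step S (-(k : ℤ) - 1)
      rw [show (-(k:ℤ) - 1 + 1) = -(k:ℤ) from by omega, ih,
        show (- -(k:ℤ)) = (k:ℤ) from by omega] at step
      rw [show (-(-(k:ℤ)-1)) = (k:ℤ)+1 from by omega, hmul]
      exact step

/-- The inverse-shift map, `σ`. -/
def q2 : Vil 2 → Vil 2 := fun x => (shiftMap 2).symm x

lemma q2_preimage_cs (x : Vil 2) (l : ℤ) :
    q2 ⁻¹' (cs 2 x l) = cs 2 (shiftMap 2 x) (l - 1) := by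
  ext w
  simp only [Set.mem_preimage, mem_cs, q2, shift_symm_apply, shift_apply]
  constructor
  · intro h i hi
    have := h (i + 1) (by omega)
    rw [show (i + 1 - 1) = i from by omega] at this
    exact this
  · intro h j hj
    have := h (j - 1) (by omega)
    rw [show (j - 1 + 1) = j from by omega] at this
    exact this

lemma q2_continuous : Continuous q2 := by
  rw [show (instTopologicalSpaceVil 2) = TopologicalSpace.generateFrom
    {s | ∃ (x : Vil 2) (l : ℤ), s = (x + ·) '' UsetL 2 l} from rfl]
  refine continuous_generateFrom_iff.mpr ?_
  rintro _ ⟨x, l, rfl⟩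
  rw [show ((x + ·) '' UsetL 2 l) = cs 2 x l from rfl, q2_preimage_cs]
  exact cs_open _ _

lemma q2_measurable : Measurable q2 := q2_continuous.measurable

lemma gen_eq : (inferInstance : MeasurableSpace (Vil 2)) =
    MeasurableSpace.generateFrom (Cfam 2) := by
  have basis : ∀ O : Set (Vil 2), IsOpen O → ∀ x ∈ O, ∃ B ∈ Cfam 2, x ∈ B ∧ B ⊆ O := by
    intro O hO
    have hO' : TopologicalSpace.GenerateOpen
        {s | ∃ (x : Vil 2) (l : ℤ), s = (x + ·) '' UsetL 2 l} O := hO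
    clear hO
    induction hO' with
    | basic s hs =>
        obtain ⟨x, l, rfl⟩ := hs
        intro w hw
        exact ⟨cs 2 x l, ⟨x, l, rfl⟩, hw, le_refl _⟩
    | univ =>
        intro w _
        refine ⟨cs 2 w 0, ⟨w, 0, rfl⟩, mem_cs.mpr fun j _ => rfl, Set.subset_univ _⟩
    | inter s t _ _ ihs iht =>
        intro w hw
        obtain ⟨B1, hB1, hwB1, hB1s⟩ := ihs w hw.1
        obtain ⟨B2, hB2, hwB2, hB2t⟩ := iht w hw.2
        have hmem := isPiSystem_Cfam 2 B1 hB1 B2 hB2 ⟨w, hwB1, hwB2⟩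
        exact ⟨B1 ∩ B2, hmem, ⟨hwB1, hwB2⟩, Set.inter_subset_inter hB1s hB2t⟩
    | sUnion K _ ih =>
        intro w hw
        obtain ⟨O', hO', hwO'⟩ := hw
        obtain ⟨B, hB, hwB, hBO⟩ := ih O' hO' w hwO'
        exact ⟨B, hB, hwB, hBO.trans (Set.subset_sUnion_of_mem hO')⟩
  refine le_antisymm ?_ ?_
  · show MeasurableSpace.generateFrom {s : Set (Vil 2) | IsOpen s} ≤ _
    refine MeasurableSpace.generateFrom_le ?_
    intro O hO
    have hrep : O = ⋃₀ {B | B ∈ Cfam 2 ∧ B ⊆ O} := by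
      apply subset_antisymm
      · intro x hx
        obtain ⟨B, h1, h2, h3⟩ := basis O hO x hx
        exact ⟨B, ⟨h1, h3⟩, h2⟩
      · rintro x ⟨B, ⟨h1, h3⟩, h2⟩
        exact h3 h2
    rw [hrep]
    refine MeasurableSet.sUnion (Cfam_countable.mono fun B hB => hB.1) ?_
    intro B hB
    exact MeasurableSpace.measurableSet_generateFrom hB.1
  · refine MeasurableSpace.generateFrom_le ?_
    rintro _ ⟨x, l, rfl⟩
    exact cs_measurable x l

lemma map_q2 : Measure.map q2 S.ν = (2 : ℝ≥0∞) • S.ν := by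
  have h2 : (2 : ℝ≥0∞) ≠ 0 := by norm_num
  have h2' : (2 : ℝ≥0∞) ≠ ⊤ := by norm_num
  have hmap : ∀ (x : Vil 2) (l : ℤ),
      Measure.map q2 S.ν (cs 2 x l) = 2 ^ (-(l - 1)) := by
    intro x l
    rw [Measure.map_apply q2_measurable (cs_measurable x l), q2_preimage_cs,
      meas_cs S, meas_UsetL S]
  refine MeasureTheory.Measure.ext_of_generateFrom_of_cover_subset
    (S := Cfam 2) (T := {s | ∃ x : Vil 2, s = cs 2 x 0})
    (gen_eq) (isPiSystem_Cfam 2) ?_ ?_ ?_ ?_ ?_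
  · rintro _ ⟨x, rfl⟩
    exact ⟨x, 0, rfl⟩
  · have hsub : {s | ∃ x : Vil 2, s = cs 2 x 0} ⊆ Cfam 2 := by
      rintro _ ⟨x, rfl⟩; exact ⟨x, 0, rfl⟩
    exact Cfam_countable.mono hsub
  · rw [Set.eq_univ_iff_forall]
    intro w
    exact ⟨cs 2 w 0, ⟨w, rfl⟩, mem_cs.mpr fun j _ => rfl⟩
  · rintro _ ⟨x, rfl⟩
    rw [hmap x 0]
    norm_num
  · rintro _ ⟨x, l, rfl⟩
    rw [hmap x l, Measure.smul_apply, smul_eq_mul, meas_cs S, meas_UsetL S,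
      show (-(l - 1)) = 1 + (-l) from by omega, ENNReal.zpow_add h2 h2', zpow_one]

lemma null_q2 {N : Set (Vil 2)} (hN : S.ν N = 0) : S.ν (q2 ⁻¹' N) = 0 := by
  have h1 : S.ν (q2 ⁻¹' toMeasurable S.ν N) = 2 * S.ν (toMeasurable S.ν N) := by
    rw [← Measure.map_apply q2_measurable (measurableSet_toMeasurable _ _), map_q2 S,
      Measure.smul_apply, smul_eq_mul]
  refine le_antisymm ?_ zero_le
  calc S.ν (q2 ⁻¹' N) ≤ S.ν (q2 ⁻¹' toMeasurable S.ν N) :=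
        measure_mono (Set.preimage_mono (subset_toMeasurable _ _))
    _ = 2 * S.ν (toMeasurable S.ν N) := h1
    _ = 2 * S.ν N := by rw [measure_toMeasurable]
    _ = 0 := by rw [hN, mul_zero]

lemma null_add {N : Set (Vil 2)} (n : Vil 2) (hN : S.ν N = 0) :
    S.ν ((fun w => w + n) ⁻¹' N) = 0 := by
  have h1 : S.ν ((fun w => w + n) ⁻¹' toMeasurable S.ν N) = S.ν (toMeasurable S.ν N) :=
    (S.ν_inv n).measure_preimage (measurableSet_toMeasurable _ _).nullMeasurableSet
  refine le_antisymm ?_ zero_le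
  calc S.ν ((fun w => w + n) ⁻¹' N) ≤ S.ν ((fun w => w + n) ⁻¹' toMeasurable S.ν N) :=
        measure_mono (Set.preimage_mono (subset_toMeasurable _ _))
    _ = S.ν (toMeasurable S.ν N) := h1
    _ = S.ν N := by rw [measure_toMeasurable]
    _ = 0 := hN

lemma ae_q2 {P : Vil 2 → Prop} (h : ∀ᵐ ω ∂S.ν, P ω) :
    ∀ᵐ ω ∂S.ν, P (q2 ω) := by
  rw [ae_iff] at h ⊢
  exact null_q2 S h

lemma ae_add (n : Vil 2) {P : Vil 2 → Prop} (h : ∀ᵐ ω ∂S.ν, P ω) :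
    ∀ᵐ ω ∂S.ν, P (ω + n) := by
  rw [ae_iff] at h ⊢
  exact null_add S n h

end Measure

end CantorProofAux
namespace CantorProofAux

lemma mem_Hsub {p : ℕ} {x : Vil p} :
    x ∈ Hsub p ↔ ∀ j > 0, (x : ℤ → ZMod p) j = 0 := Iff.rfl

lemma vil_exists_bound {p : ℕ} (x : Vil p) :
    ∃ k : ℤ, ∀ j < k, (x : ℤ → ZMod p) j = 0 := x.2

instance : Countable (Hsub 2) := by
  have key : ∀ h : Hsub 2, ∃ s : Finset (ℤ × ZMod 2),
      ∀ j : ℤ, (((h : Vil 2) : ℤ → ZMod 2) j = 1 ↔ (j, (1 : ZMod 2)) ∈ s) := by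
    intro h
    obtain ⟨k, hk⟩ := vil_exists_bound (h : Vil 2)
    refine ⟨((Finset.Icc k 0).filter fun j => ((h : Vil 2) : ℤ → ZMod 2) j = 1).image
      fun j => (j, (1 : ZMod 2)), fun j => ?_⟩
    constructor
    · intro hj
      have hk' : k ≤ j := by
        by_contra hc
        rw [hk j (by omega)] at hj
        exact absurd hj (by decide)
      have h0 : j ≤ 0 := by
        by_contra hc
        rw [mem_Hsub.mp h.2 j (by omega)] at hj
        exact absurd hj (by decide)
      exact Finset.mem_image_of_mem _
        (Finset.mem_filter.mpr ⟨Finset.mem_Icc.mpr ⟨hk', h0⟩, hj⟩)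
    · intro hj
      obtain ⟨a, ha, ha2⟩ := Finset.mem_image.mp hj
      have : a = j := congrArg Prod.fst ha2
      subst this
      exact (Finset.mem_filter.mp ha).2
  choose J hJ using key
  have hinj : Function.Injective J := by
    intro h h' hhh
    have : ∀ j : ℤ, ((h : Vil 2) : ℤ → ZMod 2) j = ((h' : Vil 2) : ℤ → ZMod 2) j := by
      intro j
      have hiff : (((h : Vil 2) : ℤ → ZMod 2) j = 1 ↔ ((h' : Vil 2) : ℤ → ZMod 2) j = 1) := by
        rw [hJ h j, hJ h' j, hhh]
      revert hiff
      generalize ((h : Vil 2) : ℤ → ZMod 2) j = a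
      generalize ((h' : Vil 2) : ℤ → ZMod 2) j = b
      revert a b; decide
    exact Subtype.ext (Subtype.ext (funext this))
  exact hinj.countable

lemma vilChar_periodic {h n : Vil 2} (hh : h ∈ Hsub 2) (hn : n ∈ Hsub 2) (ω : Vil 2) :
    vilChar 2 h (ω + n) = vilChar 2 h ω := by
  suffices hs : (∑ᶠ j : ℤ, (h : ℤ → ZMod 2) j * ((ω + n : Vil 2) : ℤ → ZMod 2) (1 - j))
      = ∑ᶠ j : ℤ, (h : ℤ → ZMod 2) j * (ω : ℤ → ZMod 2) (1 - j) by
    rw [vilChar, vilChar, hs]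
  apply finsum_congr
  intro j
  by_cases hj : (h : ℤ → ZMod 2) j = 0
  · rw [hj, zero_mul, zero_mul]
  · have hj0 : ¬ j > 0 := fun c => hj (mem_Hsub.mp hh j c)
    rw [vil_add_apply, mem_Hsub.mp hn (1 - j) (by omega), add_zero]

/-- The lattice element with a single `1` in position `0`. -/
def e0 : Vil 2 := elAt 0

lemma e0_mem : e0 ∈ Hsub 2 := mem_Hsub.mpr fun j hj => if_neg (by omega)

lemma vilChar_e0 (α : Vil 2) : vilChar 2 e0 α =
    Complex.exp (2 * Real.pi * Complex.I * ((((α : ℤ → ZMod 2) 1).val : ℂ) / 2)) := by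
  have hsum : (∑ᶠ j : ℤ, (e0 : ℤ → ZMod 2) j * (α : ℤ → ZMod 2) (1 - j))
      = (α : ℤ → ZMod 2) 1 := by
    rw [finsum_eq_single _ 0]
    · show (if (0:ℤ) = 0 then (1 : ZMod 2) else 0) * (α : ℤ → ZMod 2) (1 - 0)
        = (α : ℤ → ZMod 2) 1
      rw [if_pos rfl, one_mul]
      norm_num
    · intro j hj
      show (if j = 0 then (1 : ZMod 2) else 0) * _ = 0
      rw [if_neg hj, zero_mul]
  rw [vilChar, hsum]
  norm_num

lemma vilChar_e0_zero {α : Vil 2} (h : (α : ℤ → ZMod 2) 1 = 0) : vilChar 2 e0 α = 1 := by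
  rw [vilChar_e0, h]
  have : ((0 : ZMod 2)).val = 0 := by decide
  rw [this]
  norm_num [Complex.exp_zero]

lemma vilChar_e0_one {α : Vil 2} (h : (α : ℤ → ZMod 2) 1 = 1) : vilChar 2 e0 α = -1 := by
  rw [vilChar_e0, h]
  have : ((1 : ZMod 2)).val = 1 := by decide
  rw [this]
  rw [show ((2 : ℂ) * Real.pi * Complex.I * ((((1:ℕ) : ℂ)) / 2))
      = Real.pi * Complex.I from by push_cast; ring]
  exact Complex.exp_pi_mul_I

lemma Lp_coeFn_finsetSum {α : Type*} {m0 : MeasurableSpace α} {μ : Measure α}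
    {ι : Type*} (s : Finset ι) (f : ι → Lp ℂ 2 μ) :
    ⇑(∑ i ∈ s, f i) =ᵐ[μ] fun x => ∑ i ∈ s, f i x := by
  classical
  induction s using Finset.induction_on with
  | empty =>
      simp only [Finset.sum_empty]
      filter_upwards [Lp.coeFn_zero ℂ 2 μ] with x hx
      exact hx
  | insert a s' hnot ih =>
      rw [Finset.sum_insert hnot]
      filter_upwards [Lp.coeFn_add (f a) (∑ i ∈ s', f i), ih] with x h1 h2
      simp only [Finset.sum_insert hnot]
      rw [h1]
      show f a x + (∑ i ∈ s', f i) x = _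
      rw [h2]

end CantorProofAux
namespace CantorProofAux

open VilenkinSetting

/-- **Fiber lemma.** Every element of a principal shift-invariant space has,
almost everywhere, fibers that are coordinatewise limits of scalar multiples
of the fiber of the generator. -/
lemma lemA (S : VilenkinSetting 2) (g f : Lp ℂ 2 S.μ) (hf : f ∈ S.pSIS g) :
    ∀ᵐ ω ∂S.ν, ∃ c : ℕ → ℂ, ∀ n : Hsub 2,
      Filter.Tendsto (fun k => c k * (S.F g : Vil 2 → ℂ) (ω + (n : Vil 2))) Filter.atTop
        (𝓝 ((S.F f : Vil 2 → ℂ) (ω + (n : Vil 2)))) := by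
  haveI : Fact ((1 : ℝ≥0∞) ≤ 2) := ⟨one_le_two⟩
  have hf' : f ∈ closure ((Submodule.span ℂ
      (Set.range fun h : Hsub 2 => S.T h g) : Submodule ℂ _) : Set (Lp ℂ 2 S.μ)) := hf
  obtain ⟨u, hu_mem, hu_lim⟩ := mem_closure_iff_seq_limit.mp hf'
  choose c hc using fun k => Finsupp.mem_span_range_iff_exists_finsupp.mp (hu_mem k)
  set P : ℕ → Vil 2 → ℂ :=
    fun k ω => (c k).sum fun h a => a * vilChar 2 (h : Vil 2) ω with hP
  have key : ∀ k, (S.F (u k) : Vil 2 → ℂ)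
      =ᵐ[S.ν] fun ω => P k ω * (S.F g : Vil 2 → ℂ) ω := by
    intro k
    have hFrep : S.F (u k) = ∑ h ∈ (c k).support, S.F ((c k) h • S.T h g) := by
      rw [← hc k, Finsupp.sum, map_sum]
    have tsum := Lp_coeFn_finsetSum ((c k).support) (fun h => S.F ((c k) h • S.T h g))
    have hterm : ∀ᵐ ω ∂S.ν, ∀ h : Hsub 2,
        (S.F ((c k) h • S.T h g) : Vil 2 → ℂ) ω
          = (c k) h * (vilChar 2 (h : Vil 2) ω * (S.F g : Vil 2 → ℂ) ω) := by
      rw [ae_all_iff]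
      intro h
      have h1 : S.F ((c k) h • S.T h g) = (c k) h • S.F (S.T h g) :=
        S.F.map_smul ((c k) h) (S.T h g)
      rw [h1]
      filter_upwards [Lp.coeFn_smul ((c k) h) (S.F (S.T h g)),
        S.F_T (h : Vil 2) h.2 g] with ω e1 e2
      rw [e1]
      show (c k) h * (S.F (S.T h g) : Vil 2 → ℂ) ω = _
      rw [e2]
    rw [hFrep]
    filter_upwards [tsum, hterm] with ω h1 h2
    rw [h1, Finset.sum_congr rfl (fun h _ => by rw [h2 h, ← mul_assoc])]
    show _ = ((c k).sum fun h a => a * vilChar 2 (h : Vil 2) ω) * (S.F g : Vil 2 → ℂ) ω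
    rw [Finsupp.sum, Finset.sum_mul]
  have hFlim : Filter.Tendsto (fun k => S.F (u k)) Filter.atTop (𝓝 (S.F f)) :=
    (S.F.continuous.tendsto f).comp hu_lim
  have hmeas : TendstoInMeasure S.ν (fun k => ⇑(S.F (u k))) Filter.atTop ⇑(S.F f) :=
    tendstoInMeasure_of_tendsto_Lp hFlim
  obtain ⟨ns, -, hae⟩ := hmeas.exists_seq_tendsto_ae
  have A1 : ∀ᵐ ω ∂S.ν, ∀ n : Hsub 2, ∀ k : ℕ,
      (S.F (u k) : Vil 2 → ℂ) (ω + (n : Vil 2))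
        = P k (ω + (n : Vil 2)) * (S.F g : Vil 2 → ℂ) (ω + (n : Vil 2)) := by
    rw [ae_all_iff]
    intro n
    rw [ae_all_iff]
    intro k
    exact ae_add S (n : Vil 2) (key k)
  have A2 : ∀ᵐ ω ∂S.ν, ∀ n : Hsub 2,
      Filter.Tendsto (fun i => (S.F (u (ns i)) : Vil 2 → ℂ) (ω + (n : Vil 2)))
        Filter.atTop (𝓝 ((S.F f : Vil 2 → ℂ) (ω + (n : Vil 2)))) := by
    rw [ae_all_iff]
    intro n
    exact ae_add S (n : Vil 2) hae
  filter_upwards [A1, A2] with ω h1 h2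
  refine ⟨fun i => P (ns i) ω, fun n => ?_⟩
  have heq : ∀ i, P (ns i) ω * (S.F g : Vil 2 → ℂ) (ω + (n : Vil 2))
      = (S.F (u (ns i)) : Vil 2 → ℂ) (ω + (n : Vil 2)) := by
    intro i
    rw [h1 n (ns i)]
    congr 1
    exact (Finsupp.sum_congr fun h _ => by
      rw [vilChar_periodic h.2 n.2 ω]).symm
  exact (h2 n).congr fun i => (heq i).symm

end CantorProofAux
namespace CantorProofAux

lemma zmod2_add_self (a : ZMod 2) : a + a = 0 := by revert a; decide

lemma vil2_add_self (x : Vil 2) : x + x = 0 := by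
  apply Subtype.ext
  funext j
  show (x : ℤ → ZMod 2) j + (x : ℤ → ZMod 2) j = 0
  exact zmod2_add_self _

lemma mem_Lam1 {n : Vil 2} :
    n ∈ Lam1 2 ↔ n ∈ Hsub 2 ∧ (shiftMap 2).symm n ∈ Hsub 2 := Iff.rfl

lemma dotEl_apply (j : ℤ) :
    ((dotEl 2 1 : Vil 2) : ℤ → ZMod 2) j = if j = 1 then 1 else 0 := rfl

lemma n0_of_not_lam1 {n : Vil 2} (hn : n ∈ Hsub 2) (h : n ∉ Lam1 2) :
    (n : ℤ → ZMod 2) 0 = 1 := by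
  by_contra h0
  apply h
  refine mem_Lam1.mpr ⟨hn, mem_Hsub.mpr fun j hj => ?_⟩
  rw [shift_symm_apply]
  rcases eq_or_lt_of_le (by omega : (1 : ℤ) ≤ j) with hj1 | hj1
  · rw [← hj1]
    norm_num
    rcases zmod2_cases ((n : ℤ → ZMod 2) 0) with hc | hc
    · exact hc
    · exact absurd hc h0
  · exact mem_Hsub.mp hn (j - 1) (by omega)

lemma n0_of_lam1 {n : Vil 2} (h : n ∈ Lam1 2) : (n : ℤ → ZMod 2) 0 = 0 := by
  have := mem_Hsub.mp h.2 1 (by omega)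
  rw [shift_symm_apply] at this
  norm_num at this
  exact this

/-- Decomposition `σn = 0.1 + (σn + 0.1)` with `σn + 0.1 ∈ Λ` for `n ∈ Λ ∖ Λ₁`. -/
lemma sigma_decomp {n : Vil 2} (hn : n ∈ Hsub 2) (h : n ∉ Lam1 2) :
    ((shiftMap 2).symm n + dotEl 2 1 : Vil 2) ∈ Hsub 2 := by
  rw [mem_Hsub]
  intro j hj
  rw [vil_add_apply, shift_symm_apply, dotEl_apply]
  by_cases hj1 : j = 1
  · subst hj1
    norm_num
    rw [n0_of_not_lam1 hn h]
    decide
  · rw [mem_Hsub.mp hn (j - 1) (by omega), if_neg hj1, add_zero]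

end CantorProofAux
namespace CantorProofAux

lemma exists_good {α : Type*} {m0 : MeasurableSpace α} {μ : MeasureTheory.Measure α}
    {s : Set α} {p : α → Prop} (hs : 0 < μ s) (hp : ∀ᵐ x ∂μ, p x) :
    ∃ x ∈ s, p x := by
  by_contra h
  push_neg at h
  have h0 : μ {x | ¬ p x} = 0 := hp
  have hle : μ s ≤ μ {x | ¬ p x} := measure_mono fun x hx => h x hx
  rw [h0] at hle
  exact absurd (le_antisymm hle zero_le) hs.ne'

end CantorProofAux
open CantorProofAux in
/-- (Cantor dyadic group, `p = 2`.) If the set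
`E = {ω ∈ Δ₂ : m(σω) = m(σω + 0.1) = 0}` has positive measure, then `W₀` is
not a principal shift-invariant space. -/
theorem W0_not_principal_of_blocked_set_pos
    (S : VilenkinSetting 2) (V : ℤ → Submodule ℂ (Lp ℂ 2 S.μ))
    (φ : Lp ℂ 2 S.μ) (hV : S.IsFMRA V φ)
    (m : Vil 2 → ℂ) (hm : S.IsFilter m)
    (href : ∀ᵐ ω ∂S.ν, S.F φ (shiftMap 2 ω) = m ω * S.F φ ω)
    (hE : 0 < S.ν (S.blockedSet φ m)) :
    ¬ ∃ ψ : Lp ℂ 2 S.μ, ψ ∈ S.Wcompl V ∧ S.pSIS ψ = S.Wcompl V := by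
  classical
  rintro ⟨ψ, hψW, hψ⟩
  obtain ⟨a, b, hlad, hφ0, -, -, hframe⟩ := hV
  obtain ⟨hpsisφ, -⟩ := hframe
  haveI : Fact ((1 : ℝ≥0∞) ≤ 2) := ⟨one_le_two⟩
  haveI : CompleteSpace (V 0) := (hlad.1 0).completeSpace_coe
  set g1 : Lp ℂ 2 S.μ := S.Dil φ with hg1def
  set g2 : Lp ℂ 2 S.μ := S.Dil (S.T e0 φ) with hg2def
  set pr1 : Lp ℂ 2 S.μ := (↑((V 0).orthogonalProjectionOnto g1) : Lp ℂ 2 S.μ) with hpr1def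
  set pr2 : Lp ℂ 2 S.μ := (↑((V 0).orthogonalProjectionOnto g2) : Lp ℂ 2 S.μ) with hpr2def
  set w1 : Lp ℂ 2 S.μ := g1 - pr1 with hw1def
  set w2 : Lp ℂ 2 S.μ := g2 - pr2 with hw2def
  -- memberships
  have hTe0 : S.T e0 φ ∈ V 0 := by
    rw [← hpsisφ]
    exact Submodule.le_topologicalClosure _
      (Submodule.subset_span ⟨(⟨e0, e0_mem⟩ : Hsub 2), rfl⟩)
  have hg1V1 : g1 ∈ V 1 := by
    have := (hlad.2.2.1 0 φ).mp hφ0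
    rwa [zero_add] at this
  have hg2V1 : g2 ∈ V 1 := by
    have := (hlad.2.2.1 0 (S.T e0 φ)).mp hTe0
    rwa [zero_add] at this
  have hV01 : V 0 ≤ V 1 := by
    have := hlad.2.1 0
    rwa [zero_add] at this
  have hpr1V0 : pr1 ∈ V 0 := ((V 0).orthogonalProjectionOnto g1).2
  have hpr2V0 : pr2 ∈ V 0 := ((V 0).orthogonalProjectionOnto g2).2
  have hw1ψ : w1 ∈ S.pSIS ψ := by
    rw [hψ]
    exact Submodule.mem_inf.mpr
      ⟨sub_mem hg1V1 (hV01 hpr1V0), Submodule.sub_starProjection_mem_orthogonal (K := V 0) g1⟩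
  have hw2ψ : w2 ∈ S.pSIS ψ := by
    rw [hψ]
    exact Submodule.mem_inf.mpr
      ⟨sub_mem hg2V1 (hV01 hpr2V0), Submodule.sub_starProjection_mem_orthogonal (K := V 0) g2⟩
  have hpr1φ : pr1 ∈ S.pSIS φ := by rw [hpsisφ]; exact hpr1V0
  have hpr2φ : pr2 ∈ S.pSIS φ := by rw [hpsisφ]; exact hpr2V0
  -- the almost-everywhere facts
  have G1 : ∀ᵐ ω ∂S.ν, ∀ n : Hsub 2,
      (S.F φ : Vil 2 → ℂ) (ω + (n : Vil 2))
        = m ((shiftMap 2).symm (ω + (n : Vil 2)))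
          * (S.F φ : Vil 2 → ℂ) ((shiftMap 2).symm (ω + (n : Vil 2))) := by
    rw [ae_all_iff]
    intro n
    have h0' : ∀ᵐ ω ∂S.ν, (S.F φ : Vil 2 → ℂ) ω
        = m ((shiftMap 2).symm ω) * (S.F φ : Vil 2 → ℂ) ((shiftMap 2).symm ω) := by
      filter_upwards [ae_q2 S href] with ω hω
      have hq : q2 ω = (shiftMap 2).symm ω := rfl
      rw [hq, (shiftMap 2).apply_symm_apply ω] at hω
      exact hω
    exact ae_add S (n : Vil 2) h0'
  have G2 : ∀ᵐ ω ∂S.ν, ∀ n : Hsub 2,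
      (S.F g1 : Vil 2 → ℂ) (ω + (n : Vil 2))
        = ((Real.sqrt 2)⁻¹ : ℂ)
          * (S.F φ : Vil 2 → ℂ) ((shiftMap 2).symm (ω + (n : Vil 2))) := by
    rw [ae_all_iff]
    intro n
    exact ae_add S (n : Vil 2) (S.F_Dil φ)
  have G3 : ∀ᵐ ω ∂S.ν, ∀ n : Hsub 2,
      (S.F g2 : Vil 2 → ℂ) (ω + (n : Vil 2))
        = ((Real.sqrt 2)⁻¹ : ℂ)
          * (S.F (S.T e0 φ) : Vil 2 → ℂ) ((shiftMap 2).symm (ω + (n : Vil 2))) := by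
    rw [ae_all_iff]
    intro n
    exact ae_add S (n : Vil 2) (S.F_Dil (S.T e0 φ))
  have G4 : ∀ᵐ ω ∂S.ν, ∀ n : Hsub 2,
      (S.F (S.T e0 φ) : Vil 2 → ℂ) ((shiftMap 2).symm (ω + (n : Vil 2)))
        = vilChar 2 e0 ((shiftMap 2).symm (ω + (n : Vil 2)))
          * (S.F φ : Vil 2 → ℂ) ((shiftMap 2).symm (ω + (n : Vil 2))) := by
    rw [ae_all_iff]
    intro n
    exact ae_add S (n : Vil 2) (ae_q2 S (S.F_T e0 e0_mem φ))
  have G5 : ∀ᵐ ω ∂S.ν, ∀ n : Hsub 2,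
      ((S.F g1 - S.F pr1 : Lp ℂ 2 S.ν) : Vil 2 → ℂ) (ω + (n : Vil 2))
        = (S.F g1 : Vil 2 → ℂ) (ω + (n : Vil 2))
          - (S.F pr1 : Vil 2 → ℂ) (ω + (n : Vil 2)) := by
    rw [ae_all_iff]
    intro n
    exact ae_add S (n : Vil 2) (Lp.coeFn_sub (S.F g1) (S.F pr1))
  have G6 : ∀ᵐ ω ∂S.ν, ∀ n : Hsub 2,
      ((S.F g2 - S.F pr2 : Lp ℂ 2 S.ν) : Vil 2 → ℂ) (ω + (n : Vil 2))
        = (S.F g2 : Vil 2 → ℂ) (ω + (n : Vil 2))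
          - (S.F pr2 : Vil 2 → ℂ) (ω + (n : Vil 2)) := by
    rw [ae_all_iff]
    intro n
    exact ae_add S (n : Vil 2) (Lp.coeFn_sub (S.F g2) (S.F pr2))
  have G7 := lemA S ψ w1 hw1ψ
  have G8 := lemA S ψ w2 hw2ψ
  have G9 := lemA S φ pr1 hpr1φ
  have G10 := lemA S φ pr2 hpr2φ
  have hcomb := (((G1.and G2).and (G3.and G4)).and
    ((G5.and G6).and (G7.and G8))).and (G9.and G10)
  obtain ⟨ω₀, hω₀E, hQ⟩ := exists_good hE hcomb
  obtain ⟨⟨⟨⟨h1, h2⟩, h3, h4⟩, ⟨h5, h6⟩, h7, h8⟩, h9, h10⟩ := hQ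
  obtain ⟨hΔ, hm1, hm2⟩ := hω₀E
  obtain ⟨hU, hs1, hs2⟩ := hΔ
  -- vanishing of the φ-fiber at ω₀
  have hvan : ∀ n : Hsub 2, (S.F φ : Vil 2 → ℂ) (ω₀ + (n : Vil 2)) = 0 := by
    intro n
    rw [h1 n]
    suffices hm0 : m ((shiftMap 2).symm (ω₀ + (n : Vil 2))) = 0 by rw [hm0, zero_mul]
    have hq : (shiftMap 2).symm (ω₀ + (n : Vil 2))
        = (shiftMap 2).symm ω₀ + (shiftMap 2).symm (n : Vil 2) :=
      map_add (shiftMap 2).symm ω₀ (n : Vil 2)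
    by_cases hcase : (n : Vil 2) ∈ Lam1 2
    · rw [hq, hm.1 _ _ hcase.2, hm1]
    · have hmem' := sigma_decomp n.2 hcase
      have hrw : (shiftMap 2).symm ω₀ + (shiftMap 2).symm (n : Vil 2)
          = ((shiftMap 2).symm ω₀ + dotEl 2 1)
            + ((shiftMap 2).symm (n : Vil 2) + dotEl 2 1) := by
        have hz := vil2_add_self (dotEl 2 1)
        calc (shiftMap 2).symm ω₀ + (shiftMap 2).symm (n : Vil 2)
            = (shiftMap 2).symm ω₀ + (shiftMap 2).symm (n : Vil 2)
              + (dotEl 2 1 + dotEl 2 1) := by rw [hz, add_zero]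
          _ = _ := by abel
      rw [hq, hrw, hm.1 _ _ hmem', hm2]
  -- the projections have vanishing fibers at ω₀
  obtain ⟨c9, hc9⟩ := h9
  obtain ⟨c10, hc10⟩ := h10
  have hpr1_0 : ∀ n : Hsub 2, (S.F pr1 : Vil 2 → ℂ) (ω₀ + (n : Vil 2)) = 0 := by
    intro n
    have ht := hc9 n
    simp only [hvan n, mul_zero] at ht
    exact (tendsto_nhds_unique tendsto_const_nhds ht).symm
  have hpr2_0 : ∀ n : Hsub 2, (S.F pr2 : Vil 2 → ℂ) (ω₀ + (n : Vil 2)) = 0 := by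
    intro n
    have ht := hc10 n
    simp only [hvan n, mul_zero] at ht
    exact (tendsto_nhds_unique tendsto_const_nhds ht).symm
  -- fibers of w1, w2 at ω₀
  have hFw1 : S.F w1 = S.F g1 - S.F pr1 := by rw [hw1def, map_sub]
  have hFw2 : S.F w2 = S.F g2 - S.F pr2 := by rw [hw2def, map_sub]
  have hw1fib : ∀ n : Hsub 2, (S.F w1 : Vil 2 → ℂ) (ω₀ + (n : Vil 2))
      = ((Real.sqrt 2)⁻¹ : ℂ)
        * (S.F φ : Vil 2 → ℂ) ((shiftMap 2).symm (ω₀ + (n : Vil 2))) := by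
    intro n
    rw [hFw1, h5 n, hpr1_0 n, sub_zero, h2 n]
  have hw2fib : ∀ n : Hsub 2, (S.F w2 : Vil 2 → ℂ) (ω₀ + (n : Vil 2))
      = ((Real.sqrt 2)⁻¹ : ℂ)
        * (vilChar 2 e0 ((shiftMap 2).symm (ω₀ + (n : Vil 2)))
          * (S.F φ : Vil 2 → ℂ) ((shiftMap 2).symm (ω₀ + (n : Vil 2)))) := by
    intro n
    rw [hFw2, h6 n, hpr2_0 n, sub_zero, h3 n, h4 n]
  -- two nonvanishing coordinates of the dilated fiber
  have hex1 : ∃ n : (Lam1 2 : Set (Vil 2)),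
      (S.F φ : Vil 2 → ℂ) ((shiftMap 2).symm (ω₀ + (n : Vil 2))) ≠ 0 := by
    by_contra hc
    push_neg at hc
    refine hs1 ?_
    simp only [VilenkinSetting.sumShift]
    refine ENNReal.tsum_eq_zero.mpr fun n => ?_
    rw [hc n]
    simp
  have hex2 : ∃ n : (LamO 2 : Set (Vil 2)),
      (S.F φ : Vil 2 → ℂ) ((shiftMap 2).symm (ω₀ + (n : Vil 2))) ≠ 0 := by
    by_contra hc
    push_neg at hc
    refine hs2 ?_
    simp only [VilenkinSetting.sumShift]
    refine ENNReal.tsum_eq_zero.mpr fun n => ?_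
    rw [hc n]
    simp
  obtain ⟨n₁, hn₁⟩ := hex1
  obtain ⟨n₂, hn₂⟩ := hex2
  have hn₁H : (n₁ : Vil 2) ∈ Hsub 2 := n₁.2.1
  have hn₂H : (n₂ : Vil 2) ∈ Hsub 2 := n₂.2.1
  let N1 : Hsub 2 := ⟨(n₁ : Vil 2), hn₁H⟩
  let N2 : Hsub 2 := ⟨(n₂ : Vil 2), hn₂H⟩
  have haφ : (S.F φ : Vil 2 → ℂ) ((shiftMap 2).symm (ω₀ + (N1 : Vil 2))) ≠ 0 := hn₁
  have hbφ : (S.F φ : Vil 2 → ℂ) ((shiftMap 2).symm (ω₀ + (N2 : Vil 2))) ≠ 0 := hn₂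
  -- character values
  have hω00 : (ω₀ : ℤ → ZMod 2) 0 = 0 := hU 0 le_rfl
  have hα : ∀ x : Vil 2, (((shiftMap 2).symm (ω₀ + x) : Vil 2) : ℤ → ZMod 2) 1
      = (ω₀ : ℤ → ZMod 2) 0 + (x : ℤ → ZMod 2) 0 := by
    intro x
    rw [shift_symm_apply]
    rw [show (1 : ℤ) - 1 = 0 from by norm_num]
    rfl
  have hχ1 : vilChar 2 e0 ((shiftMap 2).symm (ω₀ + (N1 : Vil 2))) = 1 := by
    apply vilChar_e0_zero
    rw [hα, hω00]
    show (0 : ZMod 2) + ((n₁ : Vil 2) : ℤ → ZMod 2) 0 = 0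
    rw [n0_of_lam1 n₁.2, add_zero]
  have hχ2 : vilChar 2 e0 ((shiftMap 2).symm (ω₀ + (N2 : Vil 2))) = -1 := by
    apply vilChar_e0_one
    rw [hα, hω00]
    show (0 : ZMod 2) + ((n₂ : Vil 2) : ℤ → ZMod 2) 0 = 1
    rw [n0_of_not_lam1 hn₂H n₂.2.2, zero_add]
  -- the final contradiction
  obtain ⟨c7, hc7⟩ := h7
  obtain ⟨c8, hc8⟩ := h8
  have hrc : ((Real.sqrt 2)⁻¹ : ℂ) ≠ 0 := by
    apply inv_ne_zero
    rw [Complex.ofReal_ne_zero]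
    exact Real.sqrt_ne_zero'.mpr (by norm_num)
  have L1 := hc7 N1
  rw [hw1fib N1] at L1
  have L2 := hc7 N2
  rw [hw1fib N2] at L2
  have L3 := hc8 N1
  rw [hw2fib N1, hχ1] at L3
  have L4 := hc8 N2
  rw [hw2fib N2, hχ2] at L4
  have hsψ : (S.F ψ : Vil 2 → ℂ) (ω₀ + (N1 : Vil 2)) ≠ 0 := by
    intro h0
    simp only [h0, mul_zero] at L1
    exact mul_ne_zero hrc haφ (tendsto_nhds_unique tendsto_const_nhds L1).symm
  have e1 : ((Real.sqrt 2)⁻¹ : ℂ)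
        * (S.F φ : Vil 2 → ℂ) ((shiftMap 2).symm (ω₀ + (N1 : Vil 2)))
        * (S.F ψ : Vil 2 → ℂ) (ω₀ + (N2 : Vil 2))
      = ((Real.sqrt 2)⁻¹ : ℂ)
        * (S.F φ : Vil 2 → ℂ) ((shiftMap 2).symm (ω₀ + (N2 : Vil 2)))
        * (S.F ψ : Vil 2 → ℂ) (ω₀ + (N1 : Vil 2)) := by
    have k1 := L1.mul_const ((S.F ψ : Vil 2 → ℂ) (ω₀ + (N2 : Vil 2)))
    have k2 := L2.mul_const ((S.F ψ : Vil 2 → ℂ) (ω₀ + (N1 : Vil 2)))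
    exact tendsto_nhds_unique (k1.congr fun k => by ring) k2
  have e2 : ((Real.sqrt 2)⁻¹ : ℂ)
        * (1 * (S.F φ : Vil 2 → ℂ) ((shiftMap 2).symm (ω₀ + (N1 : Vil 2))))
        * (S.F ψ : Vil 2 → ℂ) (ω₀ + (N2 : Vil 2))
      = ((Real.sqrt 2)⁻¹ : ℂ)
        * (-1 * (S.F φ : Vil 2 → ℂ) ((shiftMap 2).symm (ω₀ + (N2 : Vil 2))))
        * (S.F ψ : Vil 2 → ℂ) (ω₀ + (N1 : Vil 2)) := by
    have k1 := L3.mul_const ((S.F ψ : Vil 2 → ℂ) (ω₀ + (N2 : Vil 2)))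
    have k2 := L4.mul_const ((S.F ψ : Vil 2 → ℂ) (ω₀ + (N1 : Vil 2)))
    exact tendsto_nhds_unique (k1.congr fun k => by ring) k2
  have h2z : (2 : ℂ) * (((Real.sqrt 2)⁻¹ : ℂ)
      * (S.F φ : Vil 2 → ℂ) ((shiftMap 2).symm (ω₀ + (N2 : Vil 2)))
      * (S.F ψ : Vil 2 → ℂ) (ω₀ + (N1 : Vil 2))) = 0 := by
    linear_combination e2 - e1
  rcases mul_eq_zero.mp h2z with hh | hh
  · norm_num at hh
  · exact mul_ne_zero (mul_ne_zero hrc hbφ) hsψ hh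
end
end

section
/- In the Cantor dyadic group FMRA setting, suppose E = {ω ∈ Δ₂ : m(σω) = m(σω+0.1) = 0} has measure zero. Then for every ω ∈ Δ₂, both σω and σω + 0.1 belong to η(V₀); moreover, almost every ω ∈ Δ₂ belongs to η(V₀). -/
/-!
Common setting: the Vilenkin group `Vil p` (sequences `ℤ → ZMod p` vanishing
below some index), its discrete subgroup `H`, the neighbourhood `U`,
the shift automorphism, the generalized characters, and a bundled structure
`VilenkinSetting` carrying the Haar measures on the group and on its dual
(realized on the same underlying sequence space), the Plancherel (Fourier)
transform, translations and the dilation operator, with their standard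
compatibility properties.
-/

open MeasureTheory Filter Topology
open scoped ENNReal NNReal Pointwise Classical ComplexConjugate

noncomputable section

namespace VilAux

lemma zmod2_cases (a : ZMod 2) : a = 0 ∨ a = 1 := by revert a; decide

lemma zmod2_add_eq_zero (a b : ZMod 2) : a + b = 0 ↔ a = b := by revert a b; decide

/-- The generating family of the topology. -/
def Sgen (p : ℕ) : Set (Set (Vil p)) :=
  {s | ∃ (x : Vil p) (l : ℤ), s = (x + ·) '' UsetL p l}

lemma topology_eq (p : ℕ) :
    (inferInstance : TopologicalSpace (Vil p)) = .generateFrom (Sgen p) := rfl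

/-- Coset described by coordinates. -/
def cs (p : ℕ) (x : Vil p) (l : ℤ) : Set (Vil p) :=
  {y | ∀ j ≤ l, (y : ℤ → ZMod p) j = (x : ℤ → ZMod p) j}

lemma image_eq (p : ℕ) (x : Vil p) (l : ℤ) : (x + ·) '' UsetL p l = cs p x l := by
  ext y
  constructor
  · rintro ⟨u, hu, rfl⟩ j hj
    show (x : ℤ → ZMod p) j + (u : ℤ → ZMod p) j = _
    rw [hu j hj, add_zero]
  · intro h
    refine ⟨-x + y, fun j hj => ?_, add_neg_cancel_left x y⟩
    show -(x : ℤ → ZMod p) j + (y : ℤ → ZMod p) j = 0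
    rw [h j hj, neg_add_cancel]

lemma cs_mem (p : ℕ) (x : Vil p) (l : ℤ) : cs p x l ∈ Sgen p :=
  ⟨x, l, (image_eq p x l).symm⟩

lemma isOpen_cs (p : ℕ) (x : Vil p) (l : ℤ) : IsOpen (cs p x l) :=
  TopologicalSpace.isOpen_generateFrom_of_mem (cs_mem p x l)

instance (p : ℕ) : BorelSpace (Vil p) := ⟨rfl⟩

lemma measurableSet_cs (p : ℕ) (x : Vil p) (l : ℤ) : MeasurableSet (cs p x l) :=
  (isOpen_cs p x l).measurableSet

lemma UsetL_eq_cs (p : ℕ) (l : ℤ) : UsetL p l = cs p 0 l := rfl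

lemma measurableSet_UsetL (p : ℕ) (l : ℤ) : MeasurableSet (UsetL p l) := by
  rw [UsetL_eq_cs]; exact measurableSet_cs p 0 l

/-- Indicator element of the Cantor group (p = 2). -/
def ind (A : Finset ℤ) : Vil 2 :=
  ⟨fun j => if j ∈ A then 1 else 0, by
    refine ⟨-(A.sup fun a => a.natAbs : ℕ), fun j hj => ?_⟩
    have hjA : j ∉ A := by
      intro hjA
      have h2 : j.natAbs ≤ A.sup fun a => a.natAbs := Finset.le_sup hjA
      omega
    exact if_neg hjA⟩

lemma ind_apply (A : Finset ℤ) (j : ℤ) :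
    ((ind A : Vil 2) : ℤ → ZMod 2) j = if j ∈ A then 1 else 0 := rfl

lemma ind_trunc (x : Vil 2) (l : ℤ) :
    ∃ A : Finset ℤ, ∀ j ≤ l, ((ind A : Vil 2) : ℤ → ZMod 2) j = (x : ℤ → ZMod 2) j := by
  obtain ⟨k, hk⟩ := x.2
  refine ⟨(Finset.Icc k l).filter (fun j => (x : ℤ → ZMod 2) j = 1), fun j hj => ?_⟩
  rcases zmod2_cases ((x : ℤ → ZMod 2) j) with h0 | h1
  · rw [h0, ind_apply, if_neg]
    simp only [Finset.mem_filter, h0]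
    intro hc
    exact absurd hc.2 (by decide)
  · rw [h1, ind_apply, if_pos]
    refine Finset.mem_filter.2 ⟨Finset.mem_Icc.2 ⟨?_, hj⟩, h1⟩
    by_contra hc
    push_neg at hc
    rw [hk j hc] at h1
    exact absurd h1 (by decide)

lemma countable_Sgen : (Sgen 2).Countable := by
  have : Sgen 2 ⊆ (fun q : Finset ℤ × ℤ => cs 2 (ind q.1) q.2) '' Set.univ := by
    rintro s ⟨x, l, rfl⟩
    obtain ⟨A, hA⟩ := ind_trunc x l
    refine ⟨(A, l), Set.mem_univ _, ?_⟩
    rw [image_eq]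
    ext y
    constructor
    · intro h j hj; rw [h j hj, hA j hj]
    · intro h j hj; rw [h j hj, ← hA j hj]
  exact ((Set.countable_univ).image _).mono this

lemma piSystem_Sgen : IsPiSystem (Sgen 2) := by
  rintro s ⟨x, l, rfl⟩ t ⟨x', k, rfl⟩ hne
  rw [image_eq] at hne ⊢
  rw [image_eq] at hne ⊢
  obtain ⟨a, ha1, ha2⟩ := hne
  have key : ∀ (u w : Vil 2) (lu lw : ℤ), lu ≤ lw → a ∈ cs 2 u lu → a ∈ cs 2 w lw →
      cs 2 u lu ∩ cs 2 w lw = cs 2 a lw := by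
    intro u w lu lw hle hau haw
    ext y
    constructor
    · rintro ⟨-, h2⟩ j hj
      rw [h2 j hj, haw j hj]
    · intro h
      constructor
      · intro j hj; rw [h j (le_trans hj hle), hau j hj]
      · intro j hj; rw [h j hj, haw j hj]
  rcases le_total l k with hlk | hkl
  · rw [key x x' l k hlk ha1 ha2]; exact cs_mem 2 a k
  · rw [Set.inter_comm, key x' x k l hkl ha2 ha1]; exact cs_mem 2 a l

lemma secondCountable : SecondCountableTopology (Vil 2) :=
  ⟨⟨Sgen 2, countable_Sgen, rfl⟩⟩

lemma measurable_eq_generateFrom :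
    (inferInstance : MeasurableSpace (Vil 2)) = .generateFrom (Sgen 2) := by
  haveI := secondCountable
  exact borel_eq_generateFrom_of_subbasis (topology_eq 2)

end VilAux

namespace VilAux

lemma shift_apply (p : ℕ) (x : Vil p) (j : ℤ) :
    ((shiftMap p x : Vil p) : ℤ → ZMod p) j = (x : ℤ → ZMod p) (j + 1) := rfl

lemma shift_symm_apply (p : ℕ) (x : Vil p) (j : ℤ) :
    (((shiftMap p).symm x : Vil p) : ℤ → ZMod p) j = (x : ℤ → ZMod p) (j - 1) := rfl

lemma add_apply (p : ℕ) (x y : Vil p) (j : ℤ) :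
    ((x + y : Vil p) : ℤ → ZMod p) j = (x : ℤ → ZMod p) j + (y : ℤ → ZMod p) j := rfl

lemma sigma_preimage_cs (x : Vil 2) (l : ℤ) :
    (⇑(shiftMap 2).symm) ⁻¹' (cs 2 x l) = cs 2 (shiftMap 2 x) (l - 1) := by
  ext z
  constructor
  · intro h j hj
    have := h (j + 1) (by omega)
    rw [shift_symm_apply] at this
    simpa [shift_apply] using this
  · intro h j hj
    rw [shift_symm_apply]
    have := h (j - 1) (by omega)
    rw [shift_apply] at this
    simpa using this

lemma continuous_sigma : Continuous (⇑(shiftMap 2).symm : Vil 2 → Vil 2) := by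
  have : Continuous[_, .generateFrom (Sgen 2)] (⇑(shiftMap 2).symm : Vil 2 → Vil 2) := by
    rw [continuous_generateFrom_iff]
    rintro s ⟨x, l, rfl⟩
    rw [image_eq, sigma_preimage_cs]
    exact isOpen_cs 2 _ _
  exact this

lemma measurable_sigma : Measurable (⇑(shiftMap 2).symm : Vil 2 → Vil 2) :=
  continuous_sigma.measurable

end VilAux

namespace VilAux

variable (S : VilenkinSetting 2)

lemma nu_cs (x : Vil 2) (l : ℤ) : S.ν (cs 2 x l) = S.ν (UsetL 2 l) := by
  have h := (S.ν_inv x).measure_preimage (measurableSet_UsetL 2 l).nullMeasurableSet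
  have hset : (fun y : Vil 2 => y + x) ⁻¹' UsetL 2 l = cs 2 x l := by
    ext y
    show (∀ j ≤ l, ((y + x : Vil 2) : ℤ → ZMod 2) j = 0) ↔ _
    simp only [add_apply, zmod2_add_eq_zero]
    rfl
  rw [← h, hset]

lemma nu_step (l : ℤ) : S.ν (UsetL 2 (l - 1)) = 2 * S.ν (UsetL 2 l) := by
  have hdecomp : UsetL 2 (l - 1) = UsetL 2 l ∪ cs 2 (ind {l}) l := by
    ext y
    constructor
    · intro h
      rcases zmod2_cases ((y : ℤ → ZMod 2) l) with h0 | h1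
      · left
        intro j hj
        rcases eq_or_lt_of_le hj with rfl | hlt
        · exact h0
        · exact h j (by omega)
      · right
        intro j hj
        rw [ind_apply]
        rcases eq_or_lt_of_le hj with rfl | hlt
        · rw [if_pos (Finset.mem_singleton_self j)]; exact h1
        · rw [if_neg (by simp; omega), h j (by omega)]
    · rintro (h | h) j hj
      · exact h j (by omega)
      · rw [h j (by omega), ind_apply, if_neg (by simp; omega)]
  have hdisj : Disjoint (UsetL 2 l) (cs 2 (ind {l}) l) := by
    rw [Set.disjoint_left]
    intro y hy hy'
    have h0 := hy l le_rfl
    have h1 := hy' l le_rfl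
    rw [ind_apply, if_pos (Finset.mem_singleton_self l)] at h1
    rw [h0] at h1
    exact absurd h1 (by decide)
  rw [hdecomp, measure_union hdisj (measurableSet_cs 2 _ _), nu_cs, two_mul]

lemma nu_U0 : S.ν (UsetL 2 0) = 1 := S.ν_U

lemma map_sigma : Measure.map (⇑(shiftMap 2).symm) S.ν = (2 : ℝ≥0∞) • S.ν := by
  have heq : ∀ s ∈ Sgen 2,
      Measure.map (⇑(shiftMap 2).symm) S.ν s = ((2 : ℝ≥0∞) • S.ν) s := by
    rintro s ⟨x, l, rfl⟩
    rw [image_eq, Measure.map_apply measurable_sigma (measurableSet_cs 2 x l),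
      sigma_preimage_cs, nu_cs, nu_step S l, Measure.smul_apply, smul_eq_mul, nu_cs]
  refine Measure.ext_of_generateFrom_of_cover_subset measurable_eq_generateFrom
    piSystem_Sgen (T := (fun A : Finset ℤ => cs 2 (ind A) 0) '' Set.univ) ?_ ?_ ?_ ?_ heq
  · rintro t ⟨A, -, rfl⟩
    exact cs_mem 2 _ _
  · exact (Set.countable_univ).image _
  · ext y
    simp only [Set.mem_sUnion, Set.mem_univ, Set.mem_image, iff_true]
    obtain ⟨A, hA⟩ := ind_trunc y 0
    exact ⟨cs 2 (ind A) 0, ⟨A, Set.mem_univ A, rfl⟩, fun j hj => (hA j hj).symm⟩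
  · rintro t ⟨A, -, rfl⟩
    rw [Measure.map_apply measurable_sigma (measurableSet_cs 2 _ _), sigma_preimage_cs,
      nu_cs, show ((0 : ℤ) - 1) = 1 - 1 - 1 by ring, show ((1 : ℤ) - 1) = 0 by ring,
      nu_step S 0, nu_U0]
    simp

lemma null_sigma_preimage {N : Set (Vil 2)} (hN : MeasurableSet N) (h0 : S.ν N = 0) :
    S.ν ((⇑(shiftMap 2).symm) ⁻¹' N) = 0 := by
  have := Measure.map_apply (μ := S.ν) measurable_sigma hN
  rw [map_sigma S, Measure.smul_apply, smul_eq_mul, h0, mul_zero] at this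
  exact this.symm

end VilAux

namespace VilAux

lemma mem_Hsub_ind {n : Vil 2} (hn : n ∈ Hsub 2) : ∃ A : Finset ℤ, ind A = n := by
  obtain ⟨k, hk⟩ := n.2
  refine ⟨(Finset.Icc k 0).filter (fun j => (n : ℤ → ZMod 2) j = 1), ?_⟩
  apply Subtype.ext
  funext j
  show ((ind _ : Vil 2) : ℤ → ZMod 2) j = _
  rw [ind_apply]
  rcases zmod2_cases ((n : ℤ → ZMod 2) j) with h0 | h1
  · rw [h0, if_neg]
    simp only [Finset.mem_filter, h0]
    intro hc
    exact absurd hc.2 (by decide)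
  · rw [h1, if_pos]
    refine Finset.mem_filter.2 ⟨Finset.mem_Icc.2 ⟨?_, ?_⟩, h1⟩
    · by_contra hc
      push_neg at hc
      rw [hk j hc] at h1
      exact absurd h1 (by decide)
    · by_contra hc
      push_neg at hc
      rw [hn j hc] at h1
      exact absurd h1 (by decide)

lemma countable_Hsub : Set.Countable {x : Vil 2 | x ∈ Hsub 2} := by
  refine Set.Countable.mono ?_ (Set.countable_range ind)
  intro n hn
  obtain ⟨A, hA⟩ := mem_Hsub_ind hn
  exact ⟨A, hA⟩

lemma Lam1_subset : Lam1 2 ⊆ {x : Vil 2 | x ∈ Hsub 2} := fun n hn => hn.1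

lemma LamO_subset : LamO 2 ⊆ {x : Vil 2 | x ∈ Hsub 2} := fun n hn => hn.1

lemma countable_Lam1 : (Lam1 2).Countable := countable_Hsub.mono Lam1_subset

lemma countable_LamO : (LamO 2).Countable := countable_Hsub.mono LamO_subset

lemma dot_add_dot : dotEl 2 1 + dotEl 2 1 = 0 := by
  apply Subtype.ext
  funext j
  show (if j = 1 then (1 : ZMod 2) else 0) + (if j = 1 then (1 : ZMod 2) else 0) = 0
  split <;> decide

lemma sigma_mem_Uset {ω : Vil 2} (h : ω ∈ Uset 2) : (shiftMap 2).symm ω ∈ Uset 2 := by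
  intro j hj
  rw [shift_symm_apply]
  exact h (j - 1) (by omega)

lemma sigma_dot_mem_Uset {ω : Vil 2} (h : ω ∈ Uset 2) :
    (shiftMap 2).symm ω + dotEl 2 1 ∈ Uset 2 := by
  intro j hj
  rw [add_apply, shift_symm_apply]
  rw [h (j - 1) (by omega)]
  show (0 : ZMod 2) + (if j = 1 then 1 else 0) = 0
  rw [if_neg (by omega), add_zero]

lemma lamO_n0 {n : Vil 2} (hn : n ∈ LamO 2) : (n : ℤ → ZMod 2) 0 = 1 := by
  have h1 : n ∈ Hsub 2 := hn.1
  have h2 : (shiftMap 2).symm n ∉ Hsub 2 := fun hc => hn.2 ⟨h1, hc⟩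
  have : ∃ j, 0 < j ∧ (((shiftMap 2).symm n : Vil 2) : ℤ → ZMod 2) j ≠ 0 := by
    by_contra hc
    push_neg at hc
    exact h2 (fun j hj => hc j hj)
  obtain ⟨j, hj, hne⟩ := this
  rw [shift_symm_apply] at hne
  have hj1 : j = 1 := by
    by_contra hc
    exact hne (h1 (j - 1) (by omega))
  rw [hj1] at hne
  simp only [show (1 : ℤ) - 1 = 0 by ring] at hne
  rcases zmod2_cases ((n : ℤ → ZMod 2) 0) with h | h
  · exact absurd h hne
  · exact h

lemma lamO_sigma_dot {n : Vil 2} (hn : n ∈ LamO 2) :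
    (shiftMap 2).symm n + dotEl 2 1 ∈ Hsub 2 := by
  intro j hj
  rw [add_apply, shift_symm_apply]
  show (n : ℤ → ZMod 2) (j - 1) + (if j = 1 then (1 : ZMod 2) else 0) = 0
  rcases eq_or_lt_of_le (by omega : (1 : ℤ) ≤ j) with rfl | hlt
  · rw [if_pos rfl, show (1 : ℤ) - 1 = 0 by ring, lamO_n0 hn]
    decide
  · rw [if_neg (by omega), hn.1 (j - 1) (by omega), add_zero]

end VilAux

namespace VilAux

variable (S : VilenkinSetting 2)

lemma Pper_ne_zero (φ : Lp ℂ 2 S.μ) {x h0 : Vil 2} (hmem : h0 ∈ Hsub 2)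
    (hne : S.F φ (x + h0) ≠ 0) : S.Pper φ x ≠ 0 := by
  intro hz
  rw [VilenkinSetting.Pper, VilenkinSetting.perF, ENNReal.tsum_eq_zero] at hz
  have := hz ⟨h0, hmem⟩
  simp only [pow_eq_zero_iff two_ne_zero, ENNReal.coe_eq_zero, nnnorm_eq_zero] at this
  exact hne this

lemma sumShift_witness (φ : Lp ℂ 2 S.μ) {s : Set (Vil 2)} {ω : Vil 2}
    (h : S.sumShift φ s ω ≠ 0) :
    ∃ n ∈ s, S.F φ ((shiftMap 2).symm (ω + n)) ≠ 0 := by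
  by_contra hc
  push_neg at hc
  apply h
  rw [VilenkinSetting.sumShift, ENNReal.tsum_eq_zero]
  rintro ⟨n, hn⟩
  rw [pow_eq_zero_iff two_ne_zero, ENNReal.coe_eq_zero, nnnorm_eq_zero]
  exact hc n hn

lemma measurable_sumShift (φ : Lp ℂ 2 S.μ) {s : Set (Vil 2)} (hs : s.Countable) :
    Measurable (S.sumShift φ s) := by
  haveI := hs.to_subtype
  apply Measurable.ennreal_tsum
  intro n
  have hcomp : Measurable fun ω : Vil 2 => (shiftMap 2).symm (ω + (n : Vil 2)) :=
    measurable_sigma.comp (S.ν_inv n).measurable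
  exact (((Lp.stronglyMeasurable (S.F φ)).measurable.comp
    hcomp).nnnorm.coe_nnreal_ennreal).pow_const 2

lemma measurableSet_Delta2 (φ : Lp ℂ 2 S.μ) : MeasurableSet (S.Delta2 φ) := by
  have h1 := measurable_sumShift S φ countable_Lam1
  have h2 := measurable_sumShift S φ countable_LamO
  have hrw : S.Delta2 φ = Uset 2 ∩ (((S.sumShift φ (Lam1 2)) ⁻¹' {0})ᶜ ∩
      ((S.sumShift φ (LamO 2)) ⁻¹' {0})ᶜ) := by
    ext ω
    simp only [VilenkinSetting.Delta2, Set.mem_setOf_eq, Set.mem_inter_iff, Set.mem_compl_iff,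
      Set.mem_preimage, Set.mem_singleton_iff]
  rw [hrw]
  exact (measurableSet_UsetL 2 0).inter
    (((h1 (measurableSet_singleton 0)).compl).inter ((h2 (measurableSet_singleton 0)).compl))

end VilAux

open VilAux in
/-- (Cantor dyadic group, `p = 2`.) If
`E = {ω ∈ Δ₂ : m(σω) = m(σω+0.1) = 0}` is null, then for every `ω ∈ Δ₂`
both `σω` and `σω + 0.1` belong to `η(V₀)`, and almost every `ω ∈ Δ₂`
belongs to `η(V₀)`. -/
theorem sigma_mem_spectrum_of_blocked_null
    (S : VilenkinSetting 2) (V : ℤ → Submodule ℂ (Lp ℂ 2 S.μ))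
    (φ : Lp ℂ 2 S.μ) (hV : S.IsFMRA V φ)
    (m : Vil 2 → ℂ) (hm : S.IsFilter m)
    (href : ∀ᵐ ω ∂S.ν, S.F φ (shiftMap 2 ω) = m ω * S.F φ ω)
    (hE : S.ν (S.blockedSet φ m) = 0) :
    (∀ ω ∈ S.Delta2 φ,
      (shiftMap 2).symm ω ∈ S.etaV0 φ ∧
      (shiftMap 2).symm ω + dotEl 2 1 ∈ S.etaV0 φ) ∧
    (∀ᵐ ω ∂(S.ν.restrict (S.Delta2 φ)), ω ∈ S.etaV0 φ) := by
  constructor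
  · rintro ω ⟨hU, h1, h2⟩
    constructor
    · refine ⟨sigma_mem_Uset hU, ?_⟩
      obtain ⟨n, hn, hne⟩ := sumShift_witness S φ h1
      apply Pper_ne_zero S φ hn.2
      rw [← map_add]
      exact hne
    · refine ⟨sigma_dot_mem_Uset hU, ?_⟩
      obtain ⟨n, hn, hne⟩ := sumShift_witness S φ h2
      apply Pper_ne_zero S φ (lamO_sigma_dot hn)
      have hrw : (shiftMap 2).symm ω + dotEl 2 1 + ((shiftMap 2).symm n + dotEl 2 1)
          = (shiftMap 2).symm (ω + n) := by
        rw [map_add, add_add_add_comm, dot_add_dot, add_zero]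
      rw [hrw]
      exact hne
  · obtain ⟨N, hsub, hNm, hN0⟩ := exists_measurable_superset_of_null (ae_iff.mp href)
    haveI : Countable {x : Vil 2 // x ∈ Hsub 2} := countable_Hsub.to_subtype
    set B : Set (Vil 2) :=
      ⋃ n : {x : Vil 2 // x ∈ Hsub 2},
        (fun ω : Vil 2 => ω + (n : Vil 2)) ⁻¹' ((⇑(shiftMap 2).symm) ⁻¹' N) with hBdef
    have hB0 : S.ν B = 0 := by
      apply measure_iUnion_null
      intro n
      rw [(S.ν_inv n).measure_preimage (measurable_sigma hNm).nullMeasurableSet]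
      exact null_sigma_preimage S hNm hN0
    rw [ae_restrict_iff' (measurableSet_Delta2 S φ)]
    have hbl : ∀ᵐ ω ∂S.ν, ω ∉ S.blockedSet φ m := measure_eq_zero_iff_ae_notMem.mp hE
    have hBn : ∀ᵐ ω ∂S.ν, ω ∉ B := measure_eq_zero_iff_ae_notMem.mp hB0
    filter_upwards [hbl, hBn] with ω hbl hBn hΔ
    refine ⟨hΔ.1, ?_⟩
    have hval : ∀ n : Vil 2, n ∈ Hsub 2 →
        S.F φ (ω + n)
          = m ((shiftMap 2).symm (ω + n)) * S.F φ ((shiftMap 2).symm (ω + n)) := by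
      intro n hn
      have hnotin : (shiftMap 2).symm (ω + n) ∉ N := by
        intro hc
        exact hBn (Set.mem_iUnion.2 ⟨⟨n, hn⟩, hc⟩)
      have hP : S.F φ (shiftMap 2 ((shiftMap 2).symm (ω + n)))
          = m ((shiftMap 2).symm (ω + n)) * S.F φ ((shiftMap 2).symm (ω + n)) := by
        by_contra hc
        exact hnotin (hsub hc)
      rwa [AddEquiv.apply_symm_apply] at hP
    have hmne : m ((shiftMap 2).symm ω) ≠ 0 ∨ m ((shiftMap 2).symm ω + dotEl 2 1) ≠ 0 := by
      by_contra hc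
      push_neg at hc
      exact hbl ⟨hΔ, hc.1, hc.2⟩
    obtain ⟨hU, h1, h2⟩ := hΔ
    rcases hmne with hm1 | hm2
    · obtain ⟨n, hn, hne⟩ := sumShift_witness S φ h1
      apply Pper_ne_zero S φ hn.1
      rw [hval n hn.1]
      refine mul_ne_zero ?_ hne
      rw [map_add, hm.1 _ _ hn.2]
      exact hm1
    · obtain ⟨n, hn, hne⟩ := sumShift_witness S φ h2
      apply Pper_ne_zero S φ hn.1
      rw [hval n hn.1]
      refine mul_ne_zero ?_ hne
      have hrw : (shiftMap 2).symm (ω + n)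
          = ((shiftMap 2).symm ω + dotEl 2 1) + ((shiftMap 2).symm n + dotEl 2 1) := by
        rw [map_add, add_add_add_comm, dot_add_dot, add_zero]
      rw [hrw, hm.1 _ _ (lamO_sigma_dot hn)]
      exact hm2
end
end

section
/- In the Cantor dyadic group FMRA setting with |E| = 0, the function ψ with ψ̂ = m_ψ · (φ̂ ∘ σ) satisfies: for a.e. ω ∈ Δ₂, Σ_{n∈Λ}|ψ̂(ω+n)|² = (Σ_{n∈Λ}|φ̂(ω+n)|²)·(Σ_{n∈Λ}|φ̂(σω+n)|²)·(Σ_{n∈Λ}|φ̂(σω+0.1+n)|²). -/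
/-!
Common setting: the Vilenkin group `Vil p` (sequences `ℤ → ZMod p` vanishing
below some index), its discrete subgroup `H`, the neighbourhood `U`,
the shift automorphism, the generalized characters, and a bundled structure
`VilenkinSetting` carrying the Haar measures on the group and on its dual
(realized on the same underlying sequence space), the Plancherel (Fourier)
transform, translations and the dilation operator, with their standard
compatibility properties.
-/

open MeasureTheory Filter Topology
open scoped ENNReal NNReal Pointwise Classical ComplexConjugate

noncomputable section

/-! ### Auxiliary development -/

namespace CantorAux

open TopologicalSpace MeasureTheory

variable {p : ℕ}

lemma coord_add (x y : Vil p) (j : ℤ) :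
    ((x + y : Vil p) : ℤ → ZMod p) j = (x : ℤ → ZMod p) j + (y : ℤ → ZMod p) j := rfl

lemma coord_neg (x : Vil p) (j : ℤ) :
    ((-x : Vil p) : ℤ → ZMod p) j = -((x : ℤ → ZMod p) j) := rfl

lemma coord_shift (x : Vil p) (j : ℤ) :
    ((shiftMap p x : Vil p) : ℤ → ZMod p) j = (x : ℤ → ZMod p) (j + 1) := rfl

lemma coord_shift_symm (x : Vil p) (j : ℤ) :
    (((shiftMap p).symm x : Vil p) : ℤ → ZMod p) j = (x : ℤ → ZMod p) (j - 1) := rfl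

lemma vil_ext {x y : Vil p} (h : ∀ j, (x : ℤ → ZMod p) j = (y : ℤ → ZMod p) j) : x = y :=
  Subtype.ext (funext h)

lemma two_add_self (x : Vil 2) : x + x = 0 := by
  apply vil_ext
  intro j
  rw [coord_add]
  have : ∀ a : ZMod 2, a + a = 0 := by decide
  exact this _

lemma mem_Hsub {x : Vil p} : x ∈ Hsub p ↔ ∀ j > 0, (x : ℤ → ZMod p) j = 0 := Iff.rfl

lemma mem_UsetL {x : Vil p} {l : ℤ} : x ∈ UsetL p l ↔ ∀ j ≤ l, (x : ℤ → ZMod p) j = 0 := Iff.rfl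

/-- The unit vector with a `1` in position `i`. -/
def uvec (i : ℤ) : Vil 2 :=
  ⟨fun j => if j = i then 1 else 0, ⟨i, fun j hj => if_neg (by omega)⟩⟩

lemma coord_uvec (i j : ℤ) : ((uvec i : Vil 2) : ℤ → ZMod 2) j = if j = i then 1 else 0 := rfl

lemma dotEl_eq_uvec : dotEl 2 1 = uvec 1 := rfl

/-- Truncation at level `l`: keep the coordinates `≤ l`, zero out the rest. -/
def trunc (l : ℤ) (x : Vil p) : Vil p :=
  ⟨fun j => if j ≤ l then (x : ℤ → ZMod p) j else 0, by
    obtain ⟨k, hk⟩ := x.2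
    exact ⟨k, fun j hj => by simp only; split <;> simp [hk j hj]⟩⟩

lemma coord_trunc (l : ℤ) (x : Vil p) (j : ℤ) :
    ((trunc l x : Vil p) : ℤ → ZMod p) j = if j ≤ l then (x : ℤ → ZMod p) j else 0 := rfl

lemma trunc_mem (l : ℤ) (x : Vil p) : ∀ j > l, ((trunc l x : Vil p) : ℤ → ZMod p) j = 0 :=
  fun j hj => by rw [coord_trunc, if_neg (by omega)]

lemma sub_trunc_mem (l : ℤ) (x : Vil p) : x + -(trunc l x) ∈ UsetL p l := by
  intro j hj
  rw [coord_add, coord_neg, coord_trunc, if_pos hj, add_neg_cancel]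

/-- The set of sequences supported on `(-∞, l]` is countable. -/
lemma countable_truncSet (l : ℤ) :
    Set.Countable {x : Vil p | ∀ j > l, (x : ℤ → ZMod p) j = 0} := by
  have hfin : ∀ x : Vil p, (∀ j > l, (x : ℤ → ZMod p) j = 0) →
      {j : ℤ | (x : ℤ → ZMod p) j ≠ 0}.Finite := by
    intro x hx
    obtain ⟨k, hk⟩ := x.2
    refine (Set.finite_Icc k l).subset ?_
    intro j hj
    simp only [Set.mem_setOf_eq] at hj
    simp only [Set.mem_Icc]
    constructor
    · by_contra h; exact hj (hk j (by omega))
    · by_contra h; exact hj (hx j (by omega))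
  rw [← Set.countable_coe_iff]
  haveI : Countable (ZMod p) := by
    cases p
    · exact (inferInstance : Countable ℤ)
    · exact (inferInstance : Countable (Fin _))
  have hinj : Function.Injective (fun x : {x : Vil p | ∀ j > l, (x : ℤ → ZMod p) j = 0} =>
      Finsupp.mk ((hfin x.1 x.2).toFinset) (fun j => (x.1 : ℤ → ZMod p) j)
        (fun j => by simp [Set.Finite.mem_toFinset])) := by
    intro a b hab
    refine Subtype.ext (vil_ext fun j => ?_)
    have := DFunLike.congr_fun hab j
    simpa using this
  exact hinj.countable

/-! ### Basic (cl)open sets and the Borel structure -/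

/-- The coset `x ⊕ U_l` as a preimage. -/
def bset (x : Vil p) (l : ℤ) : Set (Vil p) := (fun y => y + -x) ⁻¹' UsetL p l

lemma mem_bset {x y : Vil p} {l : ℤ} :
    y ∈ bset x l ↔ ∀ j ≤ l, ((y + -x : Vil p) : ℤ → ZMod p) j = 0 := Iff.rfl

lemma mem_bset' {x y : Vil p} {l : ℤ} : y ∈ bset x l ↔ y + -x ∈ UsetL p l := Iff.rfl

lemma image_add_eq_bset (x : Vil p) (l : ℤ) : (x + ·) '' UsetL p l = bset x l := by
  ext y
  constructor
  · rintro ⟨u, hu, rfl⟩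
    rw [mem_bset']
    have : (x + u) + -x = u := by abel
    show (x + u) + -x ∈ UsetL p l
    rw [this]
    exact hu
  · intro hy
    refine ⟨y + -x, hy, ?_⟩
    show x + (y + -x) = y
    abel

lemma UsetL_eq_bset (l : ℤ) : UsetL p l = bset (0 : Vil p) l := by
  ext y
  rw [mem_bset]
  constructor
  · intro hy j hj
    have : y + -(0 : Vil p) = y := by abel
    rw [this]; exact hy j hj
  · intro hy j hj
    have : y + -(0 : Vil p) = y := by abel
    rw [this] at hy; exact hy j hj

lemma bset_mem_gen (x : Vil p) (l : ℤ) :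
    bset x l ∈ {s : Set (Vil p) | ∃ (x : Vil p) (l : ℤ), s = (x + ·) '' UsetL p l} :=
  ⟨x, l, (image_add_eq_bset x l).symm⟩

lemma isOpen_bset (x : Vil p) (l : ℤ) : IsOpen (bset x l) :=
  TopologicalSpace.GenerateOpen.basic _ (bset_mem_gen x l)

lemma bset_eq_of_mem {x y : Vil p} {l : ℤ} (h : y ∈ bset x l) : bset x l = bset y l := by
  ext z
  have key : ∀ j ≤ l, ((z + -x : Vil p) : ℤ → ZMod p) j = ((z + -y : Vil p) : ℤ → ZMod p) j := by
    intro j hj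
    have hxy : ((y + -x : Vil p) : ℤ → ZMod p) j = 0 := h j hj
    have : (z + -x : Vil p) = (z + -y) + (y + -x) := by abel
    rw [this, coord_add, hxy, add_zero]
  constructor
  · intro hz j hj; rw [← key j hj]; exact hz j hj
  · intro hz j hj; rw [key j hj]; exact hz j hj

lemma self_mem_bset (x : Vil p) (l : ℤ) : x ∈ bset x l := by
  rw [mem_bset']
  have : x + -x = (0 : Vil p) := by abel
  rw [this]
  intro j hj; rfl

lemma bset_inter_same (y : Vil p) (l l' : ℤ) :
    bset y l ∩ bset y l' = bset y (max l l') := by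
  ext z
  simp only [Set.mem_inter_iff, mem_bset]
  constructor
  · rintro ⟨h1, h2⟩ j hj
    rcases le_or_gt j l with h | h
    · exact h1 j h
    · exact h2 j (by omega)
  · intro h
    exact ⟨fun j hj => h j (by omega), fun j hj => h j (by omega)⟩

lemma trunc_mem_bset (x : Vil p) (l : ℤ) : trunc l x ∈ bset x l := by
  intro j hj
  rw [coord_add, coord_neg, coord_trunc, if_pos hj]
  exact add_neg_cancel _

/-- The generating family of the topology. -/
abbrev genSet (p : ℕ) : Set (Set (Vil p)) :=
  {s : Set (Vil p) | ∃ (x : Vil p) (l : ℤ), s = (x + ·) '' UsetL p l}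

lemma topology_eq : (inferInstance : TopologicalSpace (Vil p)) = .generateFrom (genSet p) := rfl

lemma countable_genSet : (genSet p).Countable := by
  have hsub : genSet p ⊆ ⋃ l : ℤ, (fun x : Vil p => bset x l) ''
      {x : Vil p | ∀ j > l, (x : ℤ → ZMod p) j = 0} := by
    rintro s ⟨x, l, rfl⟩
    refine Set.mem_iUnion.2 ⟨l, ⟨trunc l x, trunc_mem l x, ?_⟩⟩
    rw [image_add_eq_bset, bset_eq_of_mem (trunc_mem_bset x l)]
  exact Set.Countable.mono hsub
    (Set.countable_iUnion fun l => (countable_truncSet l).image _)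

lemma isTopologicalBasis_genSet : IsTopologicalBasis (genSet p) := by
  refine ⟨?_, ?_, rfl⟩
  · rintro t₁ ⟨x₁, l₁, rfl⟩ t₂ ⟨x₂, l₂, rfl⟩ y hy
    rw [image_add_eq_bset] at hy ⊢
    rw [image_add_eq_bset (x := x₂)] at hy ⊢
    have h1 : bset x₁ l₁ = bset y l₁ := bset_eq_of_mem hy.1
    have h2 : bset x₂ l₂ = bset y l₂ := bset_eq_of_mem hy.2
    refine ⟨bset y (max l₁ l₂), bset_mem_gen y _, self_mem_bset y _, ?_⟩
    rw [h1, h2, bset_inter_same]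
  · apply Set.eq_univ_of_forall
    intro y
    exact ⟨bset y 0, bset_mem_gen y 0, self_mem_bset y 0⟩

instance : SecondCountableTopology (Vil p) :=
  isTopologicalBasis_genSet.secondCountableTopology countable_genSet

instance : BorelSpace (Vil p) := ⟨rfl⟩

lemma measurableSpace_eq :
    (inferInstance : MeasurableSpace (Vil p)) = .generateFrom (genSet p) :=
  borel_eq_generateFrom_of_subbasis rfl

lemma measurableSet_bset (x : Vil p) (l : ℤ) : MeasurableSet (bset x l) :=
  (isOpen_bset x l).measurableSet

lemma measurableSet_UsetL (l : ℤ) : MeasurableSet (UsetL p l) := by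
  rw [UsetL_eq_bset]; exact measurableSet_bset _ _

lemma measurableSet_Uset : MeasurableSet (Uset p) := measurableSet_UsetL 0

lemma shift_symm_preimage_bset (x : Vil p) (l : ℤ) :
    ((shiftMap p).symm : Vil p → Vil p) ⁻¹' bset x l = bset (shiftMap p x) (l - 1) := by
  ext y
  simp only [Set.mem_preimage, mem_bset]
  constructor
  · intro h j hj
    have := h (j + 1) (by omega)
    rw [coord_add, coord_neg, coord_shift_symm] at this
    rw [coord_add, coord_neg, coord_shift]
    simpa using this
  · intro h j hj
    have := h (j - 1) (by omega)
    rw [coord_add, coord_neg, coord_shift] at this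
    rw [coord_add, coord_neg, coord_shift_symm]
    simpa using this

lemma shift_preimage_bset (x : Vil p) (l : ℤ) :
    ((shiftMap p) : Vil p → Vil p) ⁻¹' bset x l = bset ((shiftMap p).symm x) (l + 1) := by
  ext y
  simp only [Set.mem_preimage, mem_bset]
  constructor
  · intro h j hj
    have := h (j - 1) (by omega)
    rw [coord_add, coord_neg, coord_shift] at this
    rw [coord_add, coord_neg, coord_shift_symm]
    simpa using this
  · intro h j hj
    have := h (j + 1) (by omega)
    rw [coord_add, coord_neg, coord_shift_symm] at this
    rw [coord_add, coord_neg, coord_shift]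
    simpa using this

lemma continuous_shift_symm : Continuous ((shiftMap p).symm : Vil p → Vil p) := by
  refine continuous_generateFrom_iff.2 ?_
  rintro s ⟨x, l, rfl⟩
  rw [image_add_eq_bset, shift_symm_preimage_bset]
  exact isOpen_bset _ _

lemma continuous_shift : Continuous ((shiftMap p) : Vil p → Vil p) := by
  refine continuous_generateFrom_iff.2 ?_
  rintro s ⟨x, l, rfl⟩
  rw [image_add_eq_bset, shift_preimage_bset]
  exact isOpen_bset _ _

lemma measurable_shift_symm : Measurable ((shiftMap p).symm : Vil p → Vil p) :=
  continuous_shift_symm.measurable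

lemma measurable_shift : Measurable ((shiftMap p) : Vil p → Vil p) :=
  continuous_shift.measurable

/-! ### Uniqueness of the normalized invariant measure, and the dilation scaling -/

section MeasureUnique

open MeasureTheory

lemma UsetL_union (l : ℤ) :
    UsetL 2 l = UsetL 2 (l+1) ∪ bset (uvec (l+1)) (l+1) := by
  ext y
  constructor
  · intro hy
    rcases (show ∀ a : ZMod 2, a = 0 ∨ a = 1 by decide) ((y : ℤ → ZMod 2) (l+1)) with h | h
    · left
      intro j hj
      by_cases hj1 : j = l + 1
      · rw [hj1]; exact h
      · exact hy j (by omega)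
    · right
      rw [mem_bset']
      intro j hj
      rw [coord_add, coord_neg, coord_uvec]
      by_cases hj1 : j = l + 1
      · rw [if_pos hj1, hj1, h]; decide
      · rw [if_neg hj1, hy j (by omega)]; simp
  · intro hy
    rcases hy with h | h
    · intro j hj; exact h j (by omega)
    · intro j hj
      have h2 := (mem_bset'.1 h) j (by omega)
      rw [coord_add, coord_neg, coord_uvec, if_neg (by omega)] at h2
      simpa using h2

lemma UsetL_disj (l : ℤ) : Disjoint (UsetL 2 (l+1)) (bset (uvec (l+1)) (l+1)) := by
  rw [Set.disjoint_left]
  intro y h1 h2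
  have ha := h1 (l+1) le_rfl
  have hb := (mem_bset'.1 h2) (l+1) le_rfl
  rw [coord_add, coord_neg, coord_uvec, if_pos rfl, ha] at hb
  exact absurd hb (by decide)

variable {lam : Measure (Vil 2)}

lemma meas_bset_eq (hinv : ∀ g : Vil 2, MeasurePreserving (fun x => x + g) lam lam)
    (x : Vil 2) (l : ℤ) : lam (bset x l) = lam (UsetL 2 l) :=
  (hinv (-x)).measure_preimage (measurableSet_UsetL l).nullMeasurableSet

lemma meas_UsetL_double (hinv : ∀ g : Vil 2, MeasurePreserving (fun x => x + g) lam lam)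
    (l : ℤ) : lam (UsetL 2 l) = 2 * lam (UsetL 2 (l+1)) := by
  rw [UsetL_union l, measure_union (UsetL_disj l) (measurableSet_bset _ _),
    meas_bset_eq hinv, two_mul]

lemma ennreal_two_mul_cancel {a b : ℝ≥0∞} (h : 2 * a = 2 * b) : a = b := by
  have h2 := congrArg (fun x => 2⁻¹ * x) h
  simpa [← mul_assoc, ENNReal.inv_mul_cancel (by norm_num : (2:ℝ≥0∞) ≠ 0)
    ENNReal.ofNat_ne_top] using h2

lemma meas_UsetL_pow (hinv : ∀ g : Vil 2, MeasurePreserving (fun x => x + g) lam lam)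
    (hU : lam (Uset 2) = 1) : ∀ l : ℤ, lam (UsetL 2 l) = 2 ^ (-l : ℤ) := by
  have h20 : (2:ℝ≥0∞) ≠ 0 := by norm_num
  have h2t : (2:ℝ≥0∞) ≠ ∞ := ENNReal.ofNat_ne_top
  intro l
  induction l using Int.induction_on with
  | zero => simpa [Uset] using hU
  | succ k ih =>
    apply ennreal_two_mul_cancel
    rw [← meas_UsetL_double hinv, ih]
    rw [show (-(k:ℤ) : ℤ) = 1 + (-(k+1:ℕ) : ℤ) by push_cast; omega,
      ENNReal.zpow_add h20 h2t]
    norm_num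
  | pred k ih =>
    have hd := meas_UsetL_double hinv (-(k:ℤ) - 1)
    rw [show (-(k:ℤ) - 1 + 1 : ℤ) = -(k:ℤ) by omega] at hd
    rw [hd, ih,
      show (-(-(k:ℤ) - 1) : ℤ) = 1 + (- -(k:ℤ)) by omega,
      ENNReal.zpow_add h20 h2t, zpow_one]

lemma haar_ext {lam1 lam2 : Measure (Vil 2)}
    (h1 : ∀ g : Vil 2, MeasurePreserving (fun x => x + g) lam1 lam1)
    (h2 : ∀ g : Vil 2, MeasurePreserving (fun x => x + g) lam2 lam2)
    (hu1 : lam1 (Uset 2) = 1) (hu2 : lam2 (Uset 2) = 1) : lam1 = lam2 := by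
  refine Measure.ext_of_generateFrom_of_cover_subset (S := genSet 2)
    (T := (fun h : Vil 2 => bset h 0) '' {x : Vil 2 | ∀ j > (0:ℤ), (x : ℤ → ZMod 2) j = 0})
    measurableSpace_eq ?_ ?_ ?_ ?_ ?_ ?_
  · -- π-system
    rintro t₁ ⟨x₁, l₁, rfl⟩ t₂ ⟨x₂, l₂, rfl⟩ hne
    obtain ⟨y, hy⟩ := hne
    rw [image_add_eq_bset] at hy ⊢
    rw [image_add_eq_bset (x := x₂)] at hy ⊢
    rw [bset_eq_of_mem hy.1, bset_eq_of_mem hy.2, bset_inter_same]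
    exact bset_mem_gen y _
  · -- T ⊆ S
    rintro s ⟨x, _, rfl⟩
    exact bset_mem_gen x 0
  · exact (countable_truncSet 0).image _
  · -- cover
    apply Set.eq_univ_of_forall
    intro y
    refine ⟨bset (trunc 0 y) 0, ⟨trunc 0 y, trunc_mem 0 y, rfl⟩, ?_⟩
    rw [← bset_eq_of_mem (trunc_mem_bset y 0)]
    exact self_mem_bset y 0
  · -- finiteness
    rintro s ⟨x, _, rfl⟩
    rw [meas_bset_eq h1, show UsetL 2 0 = Uset 2 from rfl, hu1]
    norm_num
  · -- equality on generators
    rintro s ⟨x, l, rfl⟩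
    rw [image_add_eq_bset, meas_bset_eq h1, meas_bset_eq h2,
      meas_UsetL_pow h1 hu1, meas_UsetL_pow h2 hu2]

end MeasureUnique

/-! ### The dilation scaling of the dual Haar measure -/

section Scaling

open MeasureTheory

lemma shift_symm_preimage_Uset :
    ((shiftMap 2).symm : Vil 2 → Vil 2) ⁻¹' Uset 2 = UsetL 2 (-1) := by
  ext y
  constructor
  · intro h j hj
    have h2 := h (j + 1) (by omega)
    rw [coord_shift_symm] at h2
    simpa using h2
  · intro h j hj
    rw [coord_shift_symm]
    exact h (j - 1) (by omega)

variable (S : VilenkinSetting 2)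

lemma nu_map_shift_symm :
    S.ν.map ((shiftMap 2).symm : Vil 2 → Vil 2) = (2 : ℝ≥0∞) • S.ν := by
  have hmeas : Measurable ((shiftMap 2).symm : Vil 2 → Vil 2) := measurable_shift_symm
  set Msig := S.ν.map ((shiftMap 2).symm : Vil 2 → Vil 2) with hM
  have hinv : ∀ g : Vil 2, MeasurePreserving (fun x => x + g) Msig Msig := by
    intro g
    refine ⟨(S.ν_inv g).measurable, ?_⟩
    rw [hM, Measure.map_map (S.ν_inv g).measurable hmeas]
    have hfun : ((fun x : Vil 2 => x + g) ∘ ((shiftMap 2).symm : Vil 2 → Vil 2)) =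
        (((shiftMap 2).symm : Vil 2 → Vil 2) ∘ (fun x => x + shiftMap 2 g)) := by
      funext y
      simp only [Function.comp_apply, map_add, AddEquiv.symm_apply_apply]
    rw [hfun, ← Measure.map_map hmeas (S.ν_inv (shiftMap 2 g)).measurable,
      (S.ν_inv (shiftMap 2 g)).map_eq]
  have hval : Msig (Uset 2) = 2 := by
    rw [hM, Measure.map_apply hmeas measurableSet_Uset, shift_symm_preimage_Uset,
      meas_UsetL_pow S.ν_inv S.ν_U (-1)]
    norm_num
  have h20 : (2:ℝ≥0∞) ≠ 0 := by norm_num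
  have h2t : (2:ℝ≥0∞) ≠ ∞ := ENNReal.ofNat_ne_top
  have h1 : ((2:ℝ≥0∞)⁻¹ • Msig) (Uset 2) = 1 := by
    rw [Measure.smul_apply, hval, smul_eq_mul, ENNReal.inv_mul_cancel h20 h2t]
  have hinv' : ∀ g : Vil 2,
      MeasurePreserving (fun x => x + g) ((2:ℝ≥0∞)⁻¹ • Msig) ((2:ℝ≥0∞)⁻¹ • Msig) := by
    intro g
    refine ⟨(S.ν_inv g).measurable, ?_⟩
    rw [Measure.map_smul, (hinv g).map_eq]
  have hext := haar_ext hinv' S.ν_inv h1 S.ν_U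
  calc Msig = (2:ℝ≥0∞) • ((2:ℝ≥0∞)⁻¹ • Msig) := by
        rw [smul_smul, ENNReal.mul_inv_cancel h20 h2t, one_smul]
    _ = (2:ℝ≥0∞) • S.ν := by rw [hext]

lemma null_shift_symm_preimage {N : Set (Vil 2)} (hN : S.ν N = 0) :
    S.ν (((shiftMap 2).symm : Vil 2 → Vil 2) ⁻¹' N) = 0 := by
  obtain ⟨N', hsub, hmeas', hnull'⟩ := exists_measurable_superset_of_null hN
  have h2 : S.ν (((shiftMap 2).symm : Vil 2 → Vil 2) ⁻¹' N') = 0 := by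
    rw [← Measure.map_apply measurable_shift_symm hmeas', nu_map_shift_symm,
      Measure.smul_apply, hnull', smul_eq_mul, mul_zero]
  exact measure_mono_null (Set.preimage_mono hsub) h2

lemma qmp_shift_symm :
    Measure.QuasiMeasurePreserving ((shiftMap 2).symm : Vil 2 → Vil 2) S.ν S.ν :=
  ⟨measurable_shift_symm, by
    rw [nu_map_shift_symm]
    intro s hs
    rw [Measure.smul_apply, hs, smul_eq_mul, mul_zero]⟩

lemma null_translate_preimage (g : Vil 2) {N : Set (Vil 2)} (hN : S.ν N = 0) :
    S.ν ((fun x => x + g) ⁻¹' N) = 0 :=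
  (S.ν_inv g).quasiMeasurePreserving.preimage_null hN

end Scaling

/-! ### Lattice combinatorics -/

section Lattice

open MeasureTheory

instance : Countable (Hsub p) := by
  haveI := (countable_truncSet (p := p) 0).to_subtype
  exact Countable.of_equiv ↥{x : Vil p | ∀ j > (0:ℤ), (x : ℤ → ZMod p) j = 0}
    (Equiv.subtypeEquivRight
      (p := fun x => x ∈ {x : Vil p | ∀ j > (0:ℤ), (x : ℤ → ZMod p) j = 0})
      (q := fun x => x ∈ Hsub p) fun x => Iff.rfl)

lemma countable_Lam1 : (Lam1 2).Countable :=
  (countable_truncSet 0).mono fun x hx => hx.1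

lemma countable_LamO : (LamO 2).Countable :=
  (countable_truncSet 0).mono fun x hx => hx.1

lemma lam1_shift {n : Vil 2} (hn : n ∈ Lam1 2) : (shiftMap 2).symm n ∈ Hsub 2 := hn.2

lemma lamO_shift {n : Vil 2} (hn : n ∈ LamO 2) : (shiftMap 2).symm n + uvec 1 ∈ Hsub 2 := by
  obtain ⟨hmem, hnot⟩ := hn
  have hn0 : (n : ℤ → ZMod 2) 0 ≠ 0 := by
    intro h0
    apply hnot
    refine ⟨hmem, fun i hi => ?_⟩
    rw [coord_shift_symm]
    by_cases hi1 : i = 1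
    · rw [hi1]; simpa using h0
    · exact hmem (i - 1) (by omega)
  have hn1 : (n : ℤ → ZMod 2) 0 = 1 := by
    rcases (show ∀ a : ZMod 2, a = 0 ∨ a = 1 by decide) ((n : ℤ → ZMod 2) 0) with h | h
    · exact absurd h hn0
    · exact h
  intro j hj
  rw [coord_add, coord_shift_symm, coord_uvec]
  by_cases h1 : j = 1
  · rw [if_pos h1, h1]
    norm_num [hn1]
    decide
  · rw [if_neg h1, hmem (j - 1) (by omega), add_zero]

/-- `ρ` maps `Λ` bijectively onto `Λ₁`. -/
def equivLam1 : Hsub 2 ≃ ↥(Lam1 2) where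
  toFun h := ⟨shiftMap 2 ↑h, by
    refine ⟨fun j hj => ?_, ?_⟩
    · rw [coord_shift]; exact h.2 (j + 1) (by omega)
    · rw [AddEquiv.symm_apply_apply]; exact h.2⟩
  invFun n := ⟨(shiftMap 2).symm ↑n, n.2.2⟩
  left_inv h := by
    apply Subtype.ext
    simp
  right_inv n := by
    apply Subtype.ext
    simp

lemma coe_equivLam1 (h : Hsub 2) : ((equivLam1 h : Vil 2)) = shiftMap 2 ↑h := rfl

/-- `n ↦ ρ(n ⊕ 0.1)` maps `Λ` bijectively onto `Λ ∖ Λ₁`. -/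
def equivLamO : Hsub 2 ≃ ↥(LamO 2) where
  toFun h := ⟨shiftMap 2 (↑h + uvec 1), by
    constructor
    · intro j hj
      rw [coord_shift, coord_add, coord_uvec, if_neg (by omega), add_zero]
      exact h.2 (j + 1) (by omega)
    · intro hcon
      have h2 := hcon.2
      rw [AddEquiv.symm_apply_apply] at h2
      have h3 := h2 1 one_pos
      rw [coord_add, coord_uvec, if_pos rfl, h.2 1 one_pos, zero_add] at h3
      exact absurd h3 (by decide)⟩
  invFun n := ⟨(shiftMap 2).symm ↑n + uvec 1, lamO_shift n.2⟩
  left_inv h := by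
    apply Subtype.ext
    show (shiftMap 2).symm (shiftMap 2 (↑h + uvec 1)) + uvec 1 = ↑h
    rw [AddEquiv.symm_apply_apply, add_assoc, two_add_self, add_zero]
  right_inv n := by
    apply Subtype.ext
    show shiftMap 2 ((shiftMap 2).symm ↑n + uvec 1 + uvec 1) = ↑n
    rw [add_assoc, two_add_self, add_zero, AddEquiv.apply_symm_apply]

lemma coe_equivLamO (h : Hsub 2) : ((equivLamO h : Vil 2)) = shiftMap 2 (↑h + uvec 1) := rfl

lemma tsum_Hsub_split (f : Vil 2 → ℝ≥0∞) :
    ∑' n : Hsub 2, f ↑n = (∑' n : ↥(Lam1 2), f ↑n) + ∑' n : ↥(LamO 2), f ↑n := by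
  have hdisj : Disjoint (Lam1 2) (LamO 2) := Set.disjoint_sdiff_right
  have hunion : Lam1 2 ∪ LamO 2 = (Hsub 2 : Set (Vil 2)) :=
    Set.union_diff_cancel fun x hx => hx.1
  rw [← Summable.tsum_union_disjoint (f := fun x : Vil 2 => f x) hdisj ENNReal.summable
    ENNReal.summable, ← (Equiv.subtypeEquivRight (q := fun x => x ∈ Lam1 2 ∪ LamO 2)
      (fun x => by rw [hunion])).tsum_eq]
  rfl

lemma perF_add_lattice (g : Vil 2 → ℂ) (ω : Vil 2) (h : Hsub 2) :
    VilenkinSetting.perF g (ω + ↑h) = VilenkinSetting.perF g ω := by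
  unfold VilenkinSetting.perF
  rw [← (Equiv.addLeft h).tsum_eq (f := fun n : Hsub 2 => (‖g (ω + ↑n)‖₊ : ℝ≥0∞) ^ 2)]
  apply tsum_congr
  intro n
  have : ω + ↑(h + n) = (ω + ↑h) + ↑n := by
    rw [AddSubgroup.coe_add]; abel
  rw [Equiv.coe_addLeft, this]

variable (S : VilenkinSetting 2) (φ : Lp ℂ 2 S.μ)

lemma sumShift_lam1_eq (ω : Vil 2) :
    S.sumShift φ (Lam1 2) ω = S.Pper φ ((shiftMap 2).symm ω) := by
  unfold VilenkinSetting.sumShift VilenkinSetting.Pper VilenkinSetting.perF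
  rw [← equivLam1.tsum_eq (f := fun n : ↥(Lam1 2) =>
    (‖(S.F φ : Vil 2 → ℂ) ((shiftMap 2).symm (ω + ↑n))‖₊ : ℝ≥0∞) ^ 2)]
  apply tsum_congr
  intro n
  rw [coe_equivLam1]
  congr 3
  rw [map_add, AddEquiv.symm_apply_apply]

lemma sumShift_lamO_eq (ω : Vil 2) :
    S.sumShift φ (LamO 2) ω = S.Pper φ ((shiftMap 2).symm ω + uvec 1) := by
  unfold VilenkinSetting.sumShift VilenkinSetting.Pper VilenkinSetting.perF
  rw [← equivLamO.tsum_eq (f := fun n : ↥(LamO 2) =>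
    (‖(S.F φ : Vil 2 → ℂ) ((shiftMap 2).symm (ω + ↑n))‖₊ : ℝ≥0∞) ^ 2)]
  apply tsum_congr
  intro n
  rw [coe_equivLamO]
  congr 3
  rw [map_add, AddEquiv.symm_apply_apply]
  abel

end Lattice

/-! ### Analytic lemmas: measurability, integrability, null sets -/

section Analysis

open MeasureTheory

lemma aemeasurable_tsum' {ι : Type*} [Countable ι] {α : Type*} [MeasurableSpace α]
    {f : ι → α → ℝ≥0∞} {μ : Measure α}
    (h : ∀ i, AEMeasurable (f i) μ) : AEMeasurable (fun x => ∑' i, f i x) μ := by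
  choose g hg hfg using h
  refine ⟨fun x => ∑' i, g i x, Measurable.ennreal_tsum hg, ?_⟩
  have hall : ∀ᵐ x ∂μ, ∀ i, f i x = g i x := ae_all_iff.2 hfg
  exact hall.mono fun x hx => tsum_congr fun i => hx i

variable (S : VilenkinSetting 2) (φ : Lp ℂ 2 S.μ)

lemma Pper_add_lattice (ω : Vil 2) (h : Hsub 2) :
    S.Pper φ (ω + ↑h) = S.Pper φ ω :=
  perF_add_lattice _ ω h

lemma aemeas_phi : AEMeasurable (⇑(S.F φ) : Vil 2 → ℂ) S.ν :=
  (Lp.aestronglyMeasurable (S.F φ)).aemeasurable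

lemma aemeas_phi_shift (n : Vil 2) :
    AEMeasurable (fun ω => (S.F φ : Vil 2 → ℂ) ((shiftMap 2).symm (ω + n))) S.ν :=
  ((aemeas_phi S φ).comp_quasiMeasurePreserving (qmp_shift_symm S)).comp_quasiMeasurePreserving
    (S.ν_inv n).quasiMeasurePreserving

lemma aemeas_sumShift {s : Set (Vil 2)} (hs : s.Countable) :
    AEMeasurable (S.sumShift φ s) S.ν := by
  haveI := hs.to_subtype
  refine aemeasurable_tsum' fun n : ↥s => ?_
  exact ((aemeas_phi_shift S φ ↑n).nnnorm.coe_nnreal_ennreal).pow_const 2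

lemma nullMeasurableSet_Delta2 : NullMeasurableSet (S.Delta2 φ) S.ν := by
  have h1 := (aemeas_sumShift S φ countable_Lam1).nullMeasurable
  have h2 := (aemeas_sumShift S φ countable_LamO).nullMeasurable
  have he : S.Delta2 φ = (Uset 2 ∩ (S.sumShift φ (Lam1 2) ⁻¹' {0})ᶜ) ∩
      (S.sumShift φ (LamO 2) ⁻¹' {0})ᶜ := by
    ext ω
    simp only [VilenkinSetting.Delta2, Set.mem_setOf_eq, Set.mem_inter_iff, Set.mem_compl_iff,
      Set.mem_preimage, Set.mem_singleton_iff, and_assoc]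
  rw [he]
  exact ((measurableSet_Uset.nullMeasurableSet.inter
    ((h1 (measurableSet_singleton 0)).compl)).inter ((h2 (measurableSet_singleton 0)).compl))

lemma lintegral_sq_ne_top : ∫⁻ ω, (‖(S.F φ : Vil 2 → ℂ) ω‖₊ : ℝ≥0∞) ^ 2 ∂S.ν ≠ ∞ := by
  have hmem : MemLp (⇑(S.F φ)) 2 S.ν := Lp.memLp (S.F φ)
  have hlt := hmem.eLpNorm_lt_top
  rw [eLpNorm_lt_top_iff_lintegral_rpow_enorm_lt_top (by norm_num) (by norm_num)] at hlt
  · rw [ENNReal.toReal_ofNat, show ((2:ℝ)) = ((2:ℕ):ℝ) by norm_num] at hlt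
    simp only [ENNReal.rpow_natCast] at hlt
    exact hlt.ne

lemma pairwise_disjoint_bset :
    Pairwise (Function.onFun Disjoint (fun h : Hsub 2 => bset (↑h : Vil 2) 0)) := by
  intro a b hab
  rw [Function.onFun, Set.disjoint_left]
  intro y hya hyb
  apply hab
  apply Subtype.ext; apply vil_ext
  intro j
  rcases le_or_gt j 0 with hj | hj
  · have h1 := (mem_bset'.1 hya) j hj
    have h2 := (mem_bset'.1 hyb) j hj
    rw [coord_add, coord_neg] at h1 h2
    exact (add_neg_eq_zero.1 h1).symm.trans (add_neg_eq_zero.1 h2)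
  · rw [a.2 j hj, b.2 j hj]

lemma setLIntegral_translate (f : Vil 2 → ℝ≥0∞) (g : Vil 2) :
    ∫⁻ ω in Uset 2, f (ω + g) ∂S.ν = ∫⁻ y in bset g 0, f y ∂S.ν := by
  have hmg : Measurable (fun x : Vil 2 => x + g) := (S.ν_inv g).measurable
  have hmg' : Measurable (fun x : Vil 2 => x - g) := by
    simpa [sub_eq_add_neg] using (S.ν_inv (-g)).measurable
  have hme : MeasurableEmbedding (fun x : Vil 2 => x + g) :=
    MeasurableEquiv.measurableEmbedding
      { toEquiv := Equiv.addRight g, measurable_toFun := hmg,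
        measurable_invFun := by
          simp only [Equiv.addRight_symm, Equiv.coe_addRight]
          exact (S.ν_inv (-g)).measurable }
  have hpre : (fun x : Vil 2 => x + g) ⁻¹' bset g 0 = Uset 2 := by
    ext ω
    rw [Set.mem_preimage, mem_bset']
    have : (ω + g) + -g = ω := by abel
    rw [this]
    exact Iff.rfl
  have hrmap : S.ν.restrict (bset g 0) = (S.ν.restrict (Uset 2)).map (fun x => x + g) := by
    conv_lhs => rw [← (S.ν_inv g).map_eq]
    rw [Measure.restrict_map hmg (measurableSet_bset g 0), hpre]
  rw [hrmap, hme.lintegral_map]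

lemma lintegral_Pper_U_ne_top : ∫⁻ ω in Uset 2, S.Pper φ ω ∂S.ν ≠ ∞ := by
  have hPper : ∀ ω, S.Pper φ ω
      = ∑' h : Hsub 2, (‖(S.F φ : Vil 2 → ℂ) (ω + ↑h)‖₊ : ℝ≥0∞) ^ 2 := fun _ => rfl
  have hstep1 : ∫⁻ ω in Uset 2, S.Pper φ ω ∂S.ν
      = ∑' h : Hsub 2, ∫⁻ ω in Uset 2, (‖(S.F φ : Vil 2 → ℂ) (ω + ↑h)‖₊ : ℝ≥0∞) ^ 2 ∂S.ν := by
    simp only [hPper]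
    refine lintegral_tsum fun h : Hsub 2 => ?_
    exact (((aemeas_phi S φ).comp_quasiMeasurePreserving
      (S.ν_inv ↑h).quasiMeasurePreserving).nnnorm.coe_nnreal_ennreal.pow_const 2).restrict
  have hstep2 : ∀ h : Hsub 2,
      ∫⁻ ω in Uset 2, (‖(S.F φ : Vil 2 → ℂ) (ω + ↑h)‖₊ : ℝ≥0∞) ^ 2 ∂S.ν
      = ∫⁻ y in bset (↑h) 0, (‖(S.F φ : Vil 2 → ℂ) y‖₊ : ℝ≥0∞) ^ 2 ∂S.ν := fun h =>
    setLIntegral_translate S (fun y => (‖(S.F φ : Vil 2 → ℂ) y‖₊ : ℝ≥0∞) ^ 2) ↑h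
  have hsum : S.ν.restrict (⋃ h : Hsub 2, bset (↑h : Vil 2) 0)
      = Measure.sum (fun h : Hsub 2 => S.ν.restrict (bset (↑h) 0)) :=
    Measure.restrict_iUnion pairwise_disjoint_bset (fun h => measurableSet_bset _ _)
  rw [hstep1]
  have : ∑' h : Hsub 2, ∫⁻ ω in Uset 2, (‖(S.F φ : Vil 2 → ℂ) (ω + ↑h)‖₊ : ℝ≥0∞) ^ 2 ∂S.ν
      = ∫⁻ y in ⋃ h : Hsub 2, bset (↑h : Vil 2) 0,
          (‖(S.F φ : Vil 2 → ℂ) y‖₊ : ℝ≥0∞) ^ 2 ∂S.ν := by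
    rw [tsum_congr hstep2, hsum, lintegral_sum_measure]
  rw [this]
  refine ne_top_of_le_ne_top (lintegral_sq_ne_top S φ) ?_
  exact lintegral_mono' Measure.restrict_le_self le_rfl

lemma null_Pper_top : S.ν {ω | S.Pper φ ω = ∞} = 0 := by
  have haemeas : AEMeasurable (S.Pper φ) (S.ν.restrict (Uset 2)) := by
    refine AEMeasurable.restrict ?_
    refine aemeasurable_tsum' fun h : Hsub 2 => ?_
    exact (((aemeas_phi S φ).comp_quasiMeasurePreserving
      (S.ν_inv ↑h).quasiMeasurePreserving).nnnorm.coe_nnreal_ennreal).pow_const 2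
  have hae := ae_lt_top' haemeas (lintegral_Pper_U_ne_top S φ)
  have hnull : S.ν ({ω | S.Pper φ ω = ∞} ∩ Uset 2) = 0 := by
    rw [← Measure.restrict_apply' measurableSet_Uset]
    have := (ae_iff.1 hae)
    simpa only [not_lt, top_le_iff] using this
  have hcov : {ω | S.Pper φ ω = ∞} ⊆
      ⋃ h : Hsub 2, (fun y => y + -(↑h : Vil 2)) ⁻¹' ({ω | S.Pper φ ω = ∞} ∩ Uset 2) := by
    intro ω hω
    refine Set.mem_iUnion.2 ⟨⟨trunc 0 ω, trunc_mem 0 ω⟩, ?_⟩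
    rw [Set.mem_preimage]
    constructor
    · show S.Pper φ (ω + -(trunc 0 ω)) = ∞
      have := Pper_add_lattice S φ (ω + -(trunc 0 ω)) ⟨trunc 0 ω, trunc_mem 0 ω⟩
      have harg : (ω + -(trunc 0 ω)) + trunc 0 ω = ω := by abel
      rw [harg] at this
      rw [← this]
      exact hω
    · exact sub_trunc_mem 0 ω
  refine measure_mono_null hcov (measure_iUnion_null fun h => ?_)
  exact null_translate_preimage S _ hnull

end Analysis

/-! ### The main pointwise computation -/

section Main

open MeasureTheory
open scoped ComplexConjugate

lemma nnnorm_toReal' (x : ℝ≥0∞) : ‖x.toReal‖₊ = x.toNNReal := by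
  ext
  simp only [coe_nnnorm, Real.norm_of_nonneg ENNReal.toReal_nonneg]
  rfl

lemma enn_sq_mul (a b : ℂ) :
    ((‖a * b‖₊ : ℝ≥0∞)) ^ 2 = (‖a‖₊ : ℝ≥0∞) ^ 2 * (‖b‖₊ : ℝ≥0∞) ^ 2 := by
  rw [nnnorm_mul]
  push_cast
  ring

lemma nnnorm_mpsi_branch (v : ℕ) (z : ℂ) (x : ℝ≥0∞) :
    ((‖(-1 : ℂ) ^ v * (conj z) * ((x.toReal : ℝ) : ℂ)‖₊ : ℝ≥0∞)) ^ 2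
      = (‖z‖₊ : ℝ≥0∞) ^ 2 * (x.toNNReal : ℝ≥0∞) ^ 2 := by
  rw [nnnorm_mul, nnnorm_mul, nnnorm_pow, nnnorm_neg, nnnorm_one, one_pow, one_mul,
    RCLike.nnnorm_conj, Complex.nnnorm_real, nnnorm_toReal']
  push_cast
  ring

variable (S : VilenkinSetting 2) (φ : Lp ℂ 2 S.μ) (m : Vil 2 → ℂ)

lemma ae_fin :
    ∀ᵐ ω ∂S.ν, S.Pper φ ((shiftMap 2).symm ω) ≠ ∞ ∧
      S.Pper φ ((shiftMap 2).symm ω + uvec 1) ≠ ∞ := by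
  have hM := null_Pper_top S φ
  have h1 : S.ν {ω : Vil 2 | S.Pper φ ((shiftMap 2).symm ω) = ∞} = 0 := by
    have he : {ω : Vil 2 | S.Pper φ ((shiftMap 2).symm ω) = ∞}
        = ((shiftMap 2).symm : Vil 2 → Vil 2) ⁻¹' {ω | S.Pper φ ω = ∞} := rfl
    rw [he]
    exact null_shift_symm_preimage S hM
  have h2 : S.ν {ω : Vil 2 | S.Pper φ ((shiftMap 2).symm ω + uvec 1) = ∞} = 0 := by
    have he : {ω : Vil 2 | S.Pper φ ((shiftMap 2).symm ω + uvec 1) = ∞}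
        = ((shiftMap 2).symm : Vil 2 → Vil 2) ⁻¹'
            ((fun y => y + uvec 1) ⁻¹' {ω | S.Pper φ ω = ∞}) := rfl
    rw [he]
    exact null_shift_symm_preimage S (null_translate_preimage S _ hM)
  have g1 : ∀ᵐ ω ∂S.ν, S.Pper φ ((shiftMap 2).symm ω) ≠ ∞ :=
    ae_iff.2 (by simpa using h1)
  have g2 : ∀ᵐ ω ∂S.ν, S.Pper φ ((shiftMap 2).symm ω + uvec 1) ≠ ∞ :=
    ae_iff.2 (by simpa using h2)
  exact g1.and g2

lemma ae_refine (href : ∀ᵐ ω ∂S.ν, S.F φ (shiftMap 2 ω) = m ω * S.F φ ω) :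
    ∀ᵐ ω ∂S.ν, ∀ n : Hsub 2,
      (S.F φ : Vil 2 → ℂ) (ω + ↑n)
        = m ((shiftMap 2).symm (ω + ↑n)) *
            (S.F φ : Vil 2 → ℂ) ((shiftMap 2).symm (ω + ↑n)) := by
  rw [ae_all_iff]
  intro n
  have hbad : S.ν {ζ : Vil 2 |
      ¬ ((S.F φ : Vil 2 → ℂ) (shiftMap 2 ζ) = m ζ * (S.F φ : Vil 2 → ℂ) ζ)} = 0 :=
    ae_iff.1 href
  refine ae_iff.2 (measure_mono_null ?_
    (null_translate_preimage S (↑n : Vil 2) (null_shift_symm_preimage S hbad)))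
  intro ω hω
  simp only [Set.mem_setOf_eq, Set.mem_preimage] at hω ⊢
  rw [AddEquiv.apply_symm_apply]
  exact hω

lemma main_pointwise (hmper : ∀ ω : Vil 2, ∀ h ∈ Hsub 2, m (ω + h) = m ω) (ω : Vil 2)
    (hr : ∀ n : Hsub 2, (S.F φ : Vil 2 → ℂ) (ω + ↑n)
        = m ((shiftMap 2).symm (ω + ↑n)) *
            (S.F φ : Vil 2 → ℂ) ((shiftMap 2).symm (ω + ↑n)))
    (hf1 : S.Pper φ ((shiftMap 2).symm ω) ≠ ∞)
    (hf2 : S.Pper φ ((shiftMap 2).symm ω + uvec 1) ≠ ∞)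
    (hmem : ω ∈ S.Delta2 φ) :
    VilenkinSetting.perF (S.psiHat φ m) ω =
      S.Pper φ ω * S.Pper φ ((shiftMap 2).symm ω) *
        S.Pper φ ((shiftMap 2).symm ω + dotEl 2 1) := by
  have hA : ∀ n : ↥(Lam1 2),
      m ((shiftMap 2).symm (ω + ↑n) + dotEl 2 1) = m ((shiftMap 2).symm ω + uvec 1)
      ∧ m ((shiftMap 2).symm (ω + ↑n)) = m ((shiftMap 2).symm ω)
      ∧ S.sumShift φ (LamO 2) (ω + ↑n) = S.Pper φ ((shiftMap 2).symm ω + uvec 1) := by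
    intro n
    have hσn : (shiftMap 2).symm (↑n : Vil 2) ∈ Hsub 2 := n.2.2
    have hadd : (shiftMap 2).symm (ω + ↑n)
        = (shiftMap 2).symm ω + (shiftMap 2).symm (↑n : Vil 2) := map_add _ _ _
    have hre : (shiftMap 2).symm ω + (shiftMap 2).symm (↑n : Vil 2) + uvec 1
        = ((shiftMap 2).symm ω + uvec 1) + (shiftMap 2).symm (↑n : Vil 2) := by abel
    refine ⟨?_, ?_, ?_⟩
    · rw [hadd, dotEl_eq_uvec, hre]
      exact hmper _ _ hσn
    · rw [hadd]
      exact hmper _ _ hσn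
    · rw [sumShift_lamO_eq, hadd, hre]
      exact Pper_add_lattice S φ _ ⟨_, hσn⟩
  have hB : ∀ n : ↥(LamO 2),
      m ((shiftMap 2).symm (ω + ↑n) + dotEl 2 1) = m ((shiftMap 2).symm ω)
      ∧ m ((shiftMap 2).symm (ω + ↑n)) = m ((shiftMap 2).symm ω + uvec 1)
      ∧ S.sumShift φ (LamO 2) (ω + ↑n) = S.Pper φ ((shiftMap 2).symm ω) := by
    intro n
    have hk : (shiftMap 2).symm (↑n : Vil 2) + uvec 1 ∈ Hsub 2 := lamO_shift n.2
    have hadd : (shiftMap 2).symm (ω + ↑n)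
        = (shiftMap 2).symm ω + (shiftMap 2).symm (↑n : Vil 2) := map_add _ _ _
    have hre : (shiftMap 2).symm ω + (shiftMap 2).symm (↑n : Vil 2) + uvec 1
        = (shiftMap 2).symm ω + ((shiftMap 2).symm (↑n : Vil 2) + uvec 1) := by abel
    have hre2 : (shiftMap 2).symm ω + (shiftMap 2).symm (↑n : Vil 2)
        = ((shiftMap 2).symm ω + uvec 1) + ((shiftMap 2).symm (↑n : Vil 2) + uvec 1) := by
      have : ((shiftMap 2).symm ω + uvec 1) + ((shiftMap 2).symm (↑n : Vil 2) + uvec 1)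
          = (shiftMap 2).symm ω + (shiftMap 2).symm (↑n : Vil 2) + (uvec 1 + uvec 1) := by abel
      rw [this, two_add_self, add_zero]
    refine ⟨?_, ?_, ?_⟩
    · rw [hadd, dotEl_eq_uvec, hre]
      exact hmper _ _ hk
    · rw [hadd, hre2]
      exact hmper _ _ hk
    · rw [sumShift_lamO_eq, hadd, hre]
      exact Pper_add_lattice S φ _ ⟨_, hk⟩
  have hterm1 : ∀ n : ↥(Lam1 2),
      ((‖S.psiHat φ m (ω + ↑n)‖₊ : ℝ≥0∞)) ^ 2
        = ((‖m ((shiftMap 2).symm ω + uvec 1)‖₊ : ℝ≥0∞) ^ 2 * (S.Pper φ ((shiftMap 2).symm ω + uvec 1)) ^ 2) *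
            (‖(S.F φ : Vil 2 → ℂ) ((shiftMap 2).symm (ω + ↑n))‖₊ : ℝ≥0∞) ^ 2 := by
    intro n
    have hval : S.psiHat φ m (ω + ↑n)
        = ((-1 : ℂ) ^ (((ω + ↑n : Vil 2) : ℤ → ZMod 2) 0).val *
            conj (m ((shiftMap 2).symm ω + uvec 1)) * (((S.Pper φ ((shiftMap 2).symm ω + uvec 1)).toReal : ℝ) : ℂ)) *
          (S.F φ : Vil 2 → ℂ) ((shiftMap 2).symm (ω + ↑n)) := by
      show S.mpsi φ m (ω + ↑n) * _ = _
      rw [VilenkinSetting.mpsi, if_pos (Set.add_mem_add hmem (SetLike.mem_coe.2 n.2.1)),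
        (hA n).1, (hA n).2.2]
    rw [hval, enn_sq_mul, nnnorm_mpsi_branch, ENNReal.coe_toNNReal hf2]
  have hterm0 : ∀ n : ↥(LamO 2),
      ((‖S.psiHat φ m (ω + ↑n)‖₊ : ℝ≥0∞)) ^ 2
        = ((‖m ((shiftMap 2).symm ω)‖₊ : ℝ≥0∞) ^ 2 * (S.Pper φ ((shiftMap 2).symm ω)) ^ 2) *
            (‖(S.F φ : Vil 2 → ℂ) ((shiftMap 2).symm (ω + ↑n))‖₊ : ℝ≥0∞) ^ 2 := by
    intro n
    have hval : S.psiHat φ m (ω + ↑n)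
        = ((-1 : ℂ) ^ (((ω + ↑n : Vil 2) : ℤ → ZMod 2) 0).val *
            conj (m ((shiftMap 2).symm ω)) * (((S.Pper φ ((shiftMap 2).symm ω)).toReal : ℝ) : ℂ)) *
          (S.F φ : Vil 2 → ℂ) ((shiftMap 2).symm (ω + ↑n)) := by
      show S.mpsi φ m (ω + ↑n) * _ = _
      rw [VilenkinSetting.mpsi, if_pos (Set.add_mem_add hmem (SetLike.mem_coe.2 n.2.1)),
        (hB n).1, (hB n).2.2]
    rw [hval, enn_sq_mul, nnnorm_mpsi_branch, ENNReal.coe_toNNReal hf1]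
  have hLHS : VilenkinSetting.perF (S.psiHat φ m) ω
      = (‖m ((shiftMap 2).symm ω + uvec 1)‖₊ : ℝ≥0∞) ^ 2 * (S.Pper φ ((shiftMap 2).symm ω + uvec 1)) ^ 2 * S.Pper φ ((shiftMap 2).symm ω)
        + (‖m ((shiftMap 2).symm ω)‖₊ : ℝ≥0∞) ^ 2 * (S.Pper φ ((shiftMap 2).symm ω)) ^ 2 * S.Pper φ ((shiftMap 2).symm ω + uvec 1) := by
    rw [show VilenkinSetting.perF (S.psiHat φ m) ω
        = ∑' n : Hsub 2, ((‖S.psiHat φ m (ω + ↑n)‖₊ : ℝ≥0∞)) ^ 2 from rfl,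
      tsum_Hsub_split (fun x => ((‖S.psiHat φ m (ω + x)‖₊ : ℝ≥0∞)) ^ 2)]
    congr 1
    · rw [tsum_congr hterm1, ENNReal.tsum_mul_left,
        show (∑' n : ↥(Lam1 2),
          (‖(S.F φ : Vil 2 → ℂ) ((shiftMap 2).symm (ω + ↑n))‖₊ : ℝ≥0∞) ^ 2)
          = S.sumShift φ (Lam1 2) ω from rfl,
        sumShift_lam1_eq, mul_assoc]
    · rw [tsum_congr hterm0, ENNReal.tsum_mul_left,
        show (∑' n : ↥(LamO 2),
          (‖(S.F φ : Vil 2 → ℂ) ((shiftMap 2).symm (ω + ↑n))‖₊ : ℝ≥0∞) ^ 2)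
          = S.sumShift φ (LamO 2) ω from rfl,
        sumShift_lamO_eq, mul_assoc]
  have hPper : S.Pper φ ω
      = (‖m ((shiftMap 2).symm ω)‖₊ : ℝ≥0∞) ^ 2 * S.Pper φ ((shiftMap 2).symm ω)
        + (‖m ((shiftMap 2).symm ω + uvec 1)‖₊ : ℝ≥0∞) ^ 2 * S.Pper φ ((shiftMap 2).symm ω + uvec 1) := by
    rw [show S.Pper φ ω
        = ∑' n : Hsub 2, ((‖(S.F φ : Vil 2 → ℂ) (ω + ↑n)‖₊ : ℝ≥0∞)) ^ 2 from rfl,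
      tsum_Hsub_split (fun x => ((‖(S.F φ : Vil 2 → ℂ) (ω + x)‖₊ : ℝ≥0∞)) ^ 2)]
    congr 1
    · rw [tsum_congr (fun n : ↥(Lam1 2) => by
          rw [hr ⟨↑n, n.2.1⟩, enn_sq_mul, (hA n).2.1]),
        ENNReal.tsum_mul_left,
        show (∑' n : ↥(Lam1 2),
          (‖(S.F φ : Vil 2 → ℂ) ((shiftMap 2).symm (ω + ↑n))‖₊ : ℝ≥0∞) ^ 2)
          = S.sumShift φ (Lam1 2) ω from rfl,
        sumShift_lam1_eq]
    · rw [tsum_congr (fun n : ↥(LamO 2) => by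
          rw [hr ⟨↑n, n.2.1⟩, enn_sq_mul, (hB n).2.1]),
        ENNReal.tsum_mul_left,
        show (∑' n : ↥(LamO 2),
          (‖(S.F φ : Vil 2 → ℂ) ((shiftMap 2).symm (ω + ↑n))‖₊ : ℝ≥0∞) ^ 2)
          = S.sumShift φ (LamO 2) ω from rfl,
        sumShift_lamO_eq]
  rw [hLHS, dotEl_eq_uvec, hPper]
  ring

end Main

end CantorAux

/-- (Cantor dyadic group, `p = 2`.) With `|E| = 0` and
`ψ̂ = m_ψ · (φ̂ ∘ σ)`, for a.e. `ω ∈ Δ₂`: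
`Σ_{n∈Λ}|ψ̂(ω+n)|² = (Σ_{n∈Λ}|φ̂(ω+n)|²)(Σ_{n∈Λ}|φ̂(σω+n)|²)(Σ_{n∈Λ}|φ̂(σω+0.1+n)|²)`. -/
theorem psi_periodization_product_identity
    (S : VilenkinSetting 2) (V : ℤ → Submodule ℂ (Lp ℂ 2 S.μ))
    (φ : Lp ℂ 2 S.μ) (hV : S.IsFMRA V φ)
    (m : Vil 2 → ℂ) (hm : S.IsFilter m)
    (href : ∀ᵐ ω ∂S.ν, S.F φ (shiftMap 2 ω) = m ω * S.F φ ω)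
    (hE : S.ν (S.blockedSet φ m) = 0) :
    ∀ᵐ ω ∂(S.ν.restrict (S.Delta2 φ)),
      VilenkinSetting.perF (S.psiHat φ m) ω =
        S.Pper φ ω * S.Pper φ ((shiftMap 2).symm ω) *
          S.Pper φ ((shiftMap 2).symm ω + dotEl 2 1) := by
  have hd2 := CantorAux.nullMeasurableSet_Delta2 S φ
  have hkey : ∀ᵐ ω ∂S.ν, ω ∈ S.Delta2 φ →
      VilenkinSetting.perF (S.psiHat φ m) ω =
        S.Pper φ ω * S.Pper φ ((shiftMap 2).symm ω) *
          S.Pper φ ((shiftMap 2).symm ω + dotEl 2 1) := by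
    filter_upwards [CantorAux.ae_refine S φ m href, CantorAux.ae_fin S φ] with ω hr hf hmem
    exact CantorAux.main_pointwise S φ m hm.1 ω hr hf.1 hf.2 hmem
  filter_upwards [ae_restrict_of_ae hkey, ae_restrict_mem₀ hd2] with ω hG hmem using hG hmem
end
end
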